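/- arXiv:2308.16366 — 2 statements merged into one kernel-verified Lean document; each statement's English description precedes it below -/
import Mathlib

section
/- Let W̃ = W̃(m1,m2). Every finite-dimensional irreducible complex representation of W̃ on which z acts as −Id is isomorphic to one of the following: (i) a 4-dimensional representation U(ℓ1,ℓ2) with ℓ1, ℓ2 odd, 0 < ℓ1 < m1, 0 < ℓ2 < m2; (ii) if m1 is odd, a 2-dimensional representation U(m1,ℓ2) with ℓ2 odd, 0 < ℓ2 < 2m2; (iii) if m2 is odd, a 2-dimensional representation U(ℓ1,m2) with ℓ1 odd, 0 < ℓ1 < 2m1. -/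
namespace Stmt10

/-- Generators of the double cover `W̃(m1, m2)`. -/
inductive Gen | z | r1 | f1 | r2 | f2

open FreeGroup in
/-- Defining relations of `W̃(m1, m2)`:
`r1^{m1} = z`, `r2^{m2} = z`, `f1^2 = 1`, `f2^2 = 1`, `(r1 f1)^2 = 1`, `(r2 f2)^2 = 1`,
`r1 r2 = r2 r1`, `r1 f2 = f2 r1`, `r2 f1 = f1 r2`, `(f1 f2)^2 = z`, `z^2 = 1`. -/
def rels (m1 m2 : ℕ) : Set (FreeGroup Gen) :=
  { of Gen.r1 ^ m1 * (of Gen.z)⁻¹,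
    of Gen.r2 ^ m2 * (of Gen.z)⁻¹,
    of Gen.f1 ^ 2,
    of Gen.f2 ^ 2,
    (of Gen.r1 * of Gen.f1) ^ 2,
    (of Gen.r2 * of Gen.f2) ^ 2,
    of Gen.r1 * of Gen.r2 * (of Gen.r2 * of Gen.r1)⁻¹,
    of Gen.r1 * of Gen.f2 * (of Gen.f2 * of Gen.r1)⁻¹,
    of Gen.r2 * of Gen.f1 * (of Gen.f1 * of Gen.r2)⁻¹,
    (of Gen.f1 * of Gen.f2) ^ 2 * (of Gen.z)⁻¹,
    of Gen.z ^ 2 }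

/-- The double cover `W̃(m1, m2)` of `D_{2m1} × D_{2m2}`, as a presented group. -/
abbrev Wt (m1 m2 : ℕ) := PresentedGroup (rels m1 m2)

def wz (m1 m2 : ℕ) : Wt m1 m2 := PresentedGroup.of Gen.z
def wr1 (m1 m2 : ℕ) : Wt m1 m2 := PresentedGroup.of Gen.r1
def wf1 (m1 m2 : ℕ) : Wt m1 m2 := PresentedGroup.of Gen.f1
def wr2 (m1 m2 : ℕ) : Wt m1 m2 := PresentedGroup.of Gen.r2
def wf2 (m1 m2 : ℕ) : Wt m1 m2 := PresentedGroup.of Gen.f2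

/-- `ζ m = exp(i π / m)`. -/
noncomputable def ζ (m : ℕ) : ℂ := Complex.exp (Real.pi * Complex.I / m)

/-- The matrix by which `f1` acts in `U(ℓ1,ℓ2)`. -/
def F1 : Matrix (Fin 4) (Fin 4) ℂ :=
  !![0, 1, 0, 0; 1, 0, 0, 0; 0, 0, 0, 1; 0, 0, 1, 0]

/-- The matrix by which `f2` acts in `U(ℓ1,ℓ2)`. -/
def F2 : Matrix (Fin 4) (Fin 4) ℂ :=
  !![0, 0, 1, 0; 0, 0, 0, -1; 1, 0, 0, 0; 0, -1, 0, 0]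

/-- The matrix `diag(ζ1^{ℓ1}, ζ1^{-ℓ1}, ζ1^{ℓ1}, ζ1^{-ℓ1})` by which `r1` acts. -/
noncomputable def R1 (m1 : ℕ) (ℓ1 : ℤ) : Matrix (Fin 4) (Fin 4) ℂ :=
  Matrix.diagonal ![ζ m1 ^ ℓ1, ζ m1 ^ (-ℓ1), ζ m1 ^ ℓ1, ζ m1 ^ (-ℓ1)]

/-- The matrix `diag(ζ2^{ℓ2}, ζ2^{ℓ2}, ζ2^{-ℓ2}, ζ2^{-ℓ2})` by which `r2` acts. -/
noncomputable def R2 (m2 : ℕ) (ℓ2 : ℤ) : Matrix (Fin 4) (Fin 4) ℂ :=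
  Matrix.diagonal ![ζ m2 ^ ℓ2, ζ m2 ^ ℓ2, ζ m2 ^ (-ℓ2), ζ m2 ^ (-ℓ2)]

/-- `ρ` is the representation `U(ℓ1,ℓ2)` of `W̃(m1,m2)`: the generators act by the
prescribed matrices (and `z` by `-Id`). -/
def IsU4 (m1 m2 : ℕ) (ℓ1 ℓ2 : ℤ) (ρ : Wt m1 m2 →* GL (Fin 4) ℂ) : Prop :=
  (ρ (wf1 m1 m2) : Matrix (Fin 4) (Fin 4) ℂ) = F1 ∧
  (ρ (wf2 m1 m2) : Matrix (Fin 4) (Fin 4) ℂ) = F2 ∧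
  (ρ (wr1 m1 m2) : Matrix (Fin 4) (Fin 4) ℂ) = R1 m1 ℓ1 ∧
  (ρ (wr2 m1 m2) : Matrix (Fin 4) (Fin 4) ℂ) = R2 m2 ℓ2 ∧
  (ρ (wz m1 m2) : Matrix (Fin 4) (Fin 4) ℂ) = -1

/-- Irreducibility of a matrix representation: the only invariant subspaces of `ℂ⁴`
are `0` and `ℂ⁴`. -/
def Irreducible4 {m1 m2 : ℕ} (ρ : Wt m1 m2 →* GL (Fin 4) ℂ) : Prop :=
  ∀ p : Submodule ℂ (Fin 4 → ℂ),
    (∀ w : Wt m1 m2, ∀ v ∈ p, Matrix.mulVec (ρ w : Matrix (Fin 4) (Fin 4) ℂ) v ∈ p) →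
    p = ⊥ ∨ p = ⊤

/-- Two matrix representations of `W̃(m1,m2)` on `ℂ⁴` are isomorphic: there is an
invertible intertwining linear map `ℂ⁴ → ℂ⁴`. -/
def Equiv4 {m1 m2 : ℕ} (ρ ρ' : Wt m1 m2 →* GL (Fin 4) ℂ) : Prop :=
  ∃ T : (Fin 4 → ℂ) ≃ₗ[ℂ] (Fin 4 → ℂ), ∀ (w : Wt m1 m2) (v : Fin 4 → ℂ),
    T (Matrix.mulVec (ρ w : Matrix (Fin 4) (Fin 4) ℂ) v)
      = Matrix.mulVec (ρ' w : Matrix (Fin 4) (Fin 4) ℂ) (T v)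

/-- The 2-dimensional representation `U(m1, ℓ2)` (for `m1` odd). -/
def IsU2First (m1 m2 : ℕ) (ℓ2 : ℤ) (ρ : Wt m1 m2 →* GL (Fin 2) ℂ) : Prop :=
  (ρ (wf1 m1 m2) : Matrix (Fin 2) (Fin 2) ℂ) = !![1, 0; 0, -1] ∧
  (ρ (wf2 m1 m2) : Matrix (Fin 2) (Fin 2) ℂ) = !![0, 1; 1, 0] ∧
  (ρ (wr1 m1 m2) : Matrix (Fin 2) (Fin 2) ℂ) = -1 ∧
  (ρ (wr2 m1 m2) : Matrix (Fin 2) (Fin 2) ℂ) = Matrix.diagonal ![ζ m2 ^ ℓ2, ζ m2 ^ (-ℓ2)] ∧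
  (ρ (wz m1 m2) : Matrix (Fin 2) (Fin 2) ℂ) = -1

/-- The 2-dimensional representation `U(ℓ1, m2)` (for `m2` odd). -/
def IsU2Second (m1 m2 : ℕ) (ℓ1 : ℤ) (ρ : Wt m1 m2 →* GL (Fin 2) ℂ) : Prop :=
  (ρ (wf1 m1 m2) : Matrix (Fin 2) (Fin 2) ℂ) = !![0, 1; 1, 0] ∧
  (ρ (wf2 m1 m2) : Matrix (Fin 2) (Fin 2) ℂ) = !![1, 0; 0, -1] ∧
  (ρ (wr1 m1 m2) : Matrix (Fin 2) (Fin 2) ℂ) = Matrix.diagonal ![ζ m1 ^ ℓ1, ζ m1 ^ (-ℓ1)] ∧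
  (ρ (wr2 m1 m2) : Matrix (Fin 2) (Fin 2) ℂ) = -1 ∧
  (ρ (wz m1 m2) : Matrix (Fin 2) (Fin 2) ℂ) = -1

/-- An isomorphism from an abstract representation to a 4-dimensional matrix
representation. -/
def EquivTo4 {m1 m2 : ℕ} {V : Type*} [AddCommGroup V] [Module ℂ V]
    (ρ : Representation ℂ (Wt m1 m2) V) (ρ' : Wt m1 m2 →* GL (Fin 4) ℂ) : Prop :=
  ∃ T : V ≃ₗ[ℂ] (Fin 4 → ℂ), ∀ (g : Wt m1 m2) (v : V),
    T (ρ g v) = Matrix.mulVec (ρ' g : Matrix (Fin 4) (Fin 4) ℂ) (T v)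

/-- An isomorphism from an abstract representation to a 2-dimensional matrix
representation. -/
def EquivTo2 {m1 m2 : ℕ} {V : Type*} [AddCommGroup V] [Module ℂ V]
    (ρ : Representation ℂ (Wt m1 m2) V) (ρ' : Wt m1 m2 →* GL (Fin 2) ℂ) : Prop :=
  ∃ T : V ≃ₗ[ℂ] (Fin 2 → ℂ), ∀ (g : Wt m1 m2) (v : V),
    T (ρ g v) = Matrix.mulVec (ρ' g : Matrix (Fin 2) (Fin 2) ℂ) (T v)

section GroupLemmas
variable {m1 m2 : ℕ}

lemma rel_holds {r : FreeGroup Gen} (h : r ∈ rels m1 m2) :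
    PresentedGroup.mk (rels m1 m2) r = 1 :=
  (QuotientGroup.eq_one_iff _).2 (Subgroup.subset_normalClosure h)

lemma rel_r1 : wr1 m1 m2 ^ m1 = wz m1 m2 := by
  have h := rel_holds (m1 := m1) (m2 := m2)
    (r := FreeGroup.of Gen.r1 ^ m1 * (FreeGroup.of Gen.z)⁻¹) (by simp [rels])
  simpa [wr1, wz, PresentedGroup.of, map_mul, map_pow, map_inv, mul_inv_eq_one] using h

lemma rel_r2 : wr2 m1 m2 ^ m2 = wz m1 m2 := by
  have h := rel_holds (m1 := m1) (m2 := m2)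
    (r := FreeGroup.of Gen.r2 ^ m2 * (FreeGroup.of Gen.z)⁻¹) (by simp [rels])
  simpa [wr2, wz, PresentedGroup.of, map_mul, map_pow, map_inv, mul_inv_eq_one] using h

lemma rel_f1 : wf1 m1 m2 ^ 2 = 1 := by
  have h := rel_holds (m1 := m1) (m2 := m2) (r := FreeGroup.of Gen.f1 ^ 2) (by simp [rels])
  simpa [wf1, PresentedGroup.of, map_pow] using h

lemma rel_f2 : wf2 m1 m2 ^ 2 = 1 := by
  have h := rel_holds (m1 := m1) (m2 := m2) (r := FreeGroup.of Gen.f2 ^ 2) (by simp [rels])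
  simpa [wf2, PresentedGroup.of, map_pow] using h

lemma rel_rf1 : (wr1 m1 m2 * wf1 m1 m2) ^ 2 = 1 := by
  have h := rel_holds (m1 := m1) (m2 := m2)
    (r := (FreeGroup.of Gen.r1 * FreeGroup.of Gen.f1) ^ 2) (by simp [rels])
  simpa [wr1, wf1, PresentedGroup.of, map_pow, map_mul] using h

lemma rel_rf2 : (wr2 m1 m2 * wf2 m1 m2) ^ 2 = 1 := by
  have h := rel_holds (m1 := m1) (m2 := m2)
    (r := (FreeGroup.of Gen.r2 * FreeGroup.of Gen.f2) ^ 2) (by simp [rels])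
  simpa [wr2, wf2, PresentedGroup.of, map_pow, map_mul] using h

lemma rel_c12 : wr1 m1 m2 * wr2 m1 m2 = wr2 m1 m2 * wr1 m1 m2 := by
  have h := rel_holds (m1 := m1) (m2 := m2)
    (r := FreeGroup.of Gen.r1 * FreeGroup.of Gen.r2 * (FreeGroup.of Gen.r2 * FreeGroup.of Gen.r1)⁻¹)
    (by simp [rels])
  simp only [map_mul, map_inv] at h
  rw [mul_eq_one_iff_eq_inv] at h
  simp only [mul_inv_rev, inv_inv] at h
  exact h

lemma rel_c1f2 : wr1 m1 m2 * wf2 m1 m2 = wf2 m1 m2 * wr1 m1 m2 := by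
  have h := rel_holds (m1 := m1) (m2 := m2)
    (r := FreeGroup.of Gen.r1 * FreeGroup.of Gen.f2 * (FreeGroup.of Gen.f2 * FreeGroup.of Gen.r1)⁻¹)
    (by simp [rels])
  simp only [map_mul, map_inv] at h
  rw [mul_eq_one_iff_eq_inv] at h
  simp only [mul_inv_rev, inv_inv] at h
  exact h

lemma rel_c2f1 : wr2 m1 m2 * wf1 m1 m2 = wf1 m1 m2 * wr2 m1 m2 := by
  have h := rel_holds (m1 := m1) (m2 := m2)
    (r := FreeGroup.of Gen.r2 * FreeGroup.of Gen.f1 * (FreeGroup.of Gen.f1 * FreeGroup.of Gen.r2)⁻¹)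
    (by simp [rels])
  simp only [map_mul, map_inv] at h
  rw [mul_eq_one_iff_eq_inv] at h
  simp only [mul_inv_rev, inv_inv] at h
  exact h

lemma rel_ff : (wf1 m1 m2 * wf2 m1 m2) ^ 2 = wz m1 m2 := by
  have h := rel_holds (m1 := m1) (m2 := m2)
    (r := (FreeGroup.of Gen.f1 * FreeGroup.of Gen.f2) ^ 2 * (FreeGroup.of Gen.z)⁻¹)
    (by simp [rels])
  simpa [wf1, wf2, wz, PresentedGroup.of, map_mul, map_pow, map_inv, mul_inv_eq_one] using h

lemma rel_z : wz m1 m2 ^ 2 = 1 := by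
  have h := rel_holds (m1 := m1) (m2 := m2) (r := FreeGroup.of Gen.z ^ 2) (by simp [rels])
  simpa [wz, PresentedGroup.of, map_pow] using h

-- derived
lemma wf1_sq : wf1 m1 m2 * wf1 m1 m2 = 1 := by rw [← sq]; exact rel_f1
lemma wf2_sq : wf2 m1 m2 * wf2 m1 m2 = 1 := by rw [← sq]; exact rel_f2

lemma wr1_wf1 : wr1 m1 m2 * wf1 m1 m2 = wf1 m1 m2 * (wr1 m1 m2)⁻¹ := by
  have h : (wr1 m1 m2 * wf1 m1 m2) * (wr1 m1 m2 * wf1 m1 m2) = 1 := by rw [← sq]; exact rel_rf1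
  have h2 := mul_eq_one_iff_eq_inv.mp h
  rw [h2, mul_inv_rev, inv_eq_of_mul_eq_one_left wf1_sq]

lemma wr2_wf2 : wr2 m1 m2 * wf2 m1 m2 = wf2 m1 m2 * (wr2 m1 m2)⁻¹ := by
  have h : (wr2 m1 m2 * wf2 m1 m2) * (wr2 m1 m2 * wf2 m1 m2) = 1 := by rw [← sq]; exact rel_rf2
  have h2 := mul_eq_one_iff_eq_inv.mp h
  rw [h2, mul_inv_rev, inv_eq_of_mul_eq_one_left wf2_sq]

lemma wf2_wf1 : wf2 m1 m2 * wf1 m1 m2 = wf1 m1 m2 * (wz m1 m2 * wf2 m1 m2) := by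
  have h : (wf1 m1 m2 * wf2 m1 m2) * (wf1 m1 m2 * wf2 m1 m2) = wz m1 m2 := by
    rw [← sq]; exact rel_ff
  have key : (wf1 m1 m2)⁻¹ * ((wf1 m1 m2 * wf2 m1 m2) * (wf1 m1 m2 * wf2 m1 m2)) * (wf2 m1 m2)⁻¹
      = wf2 m1 m2 * wf1 m1 m2 := by group
  rw [h] at key
  rw [← key, inv_eq_of_mul_eq_one_left wf1_sq, inv_eq_of_mul_eq_one_left wf2_sq]
  group

end GroupLemmas

section Zeta
lemma zeta_pow_m {m : ℕ} (hm : 1 ≤ m) : ζ m ^ m = -1 := by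
  rw [ζ, ← Complex.exp_nat_mul]
  have hm0 : (m : ℂ) ≠ 0 := Nat.cast_ne_zero.mpr (by omega)
  rw [show (m : ℂ) * (Real.pi * Complex.I / m) = Real.pi * Complex.I by field_simp]
  exact Complex.exp_pi_mul_I

lemma zeta_ne_zero (m : ℕ) : ζ m ≠ 0 := Complex.exp_ne_zero _

lemma zeta_zpow_m {m : ℕ} (hm : 1 ≤ m) {ℓ : ℤ} (hl : Odd ℓ) : (ζ m ^ ℓ) ^ m = -1 := by
  rw [← zpow_natCast (ζ m ^ ℓ), ← zpow_mul, mul_comm, zpow_mul, zpow_natCast, zeta_pow_m hm,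
    Odd.neg_one_zpow hl]

lemma zeta_zpow_two_m {m : ℕ} (hm : 1 ≤ m) : ζ m ^ (2 * m : ℤ) = 1 := by
  have : ζ m ^ (2 * m : ℤ) = (ζ m ^ m) ^ 2 := by
    rw [← zpow_natCast (ζ m) m, ← zpow_ofNat, ← zpow_mul]
    ring_nf
  rw [this, zeta_pow_m hm]; ring

lemma exists_ell {m : ℕ} (hm : 1 ≤ m) {μ : ℂ} (h : μ ^ m = -1) :
    ∃ ℓ : ℤ, Odd ℓ ∧ 0 < ℓ ∧ ℓ < 2 * m ∧ μ = ζ m ^ ℓ := by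
  have h2m : (2 * m : ℕ) ≠ 0 := by omega
  have hprim : IsPrimitiveRoot (ζ m) (2 * m) := by
    have := Complex.isPrimitiveRoot_exp (2 * m) h2m
    convert this using 2
    rw [ζ]
    push_cast
    rw [mul_comm (2:ℂ)]
    ring_nf
  have hμ2m : μ ^ (2 * m) = 1 := by
    rw [mul_comm, pow_mul, h]; ring
  have : NeZero (2 * m) := ⟨h2m⟩
  obtain ⟨i, hi, hξ⟩ := hprim.eq_pow_of_pow_eq_one hμ2m
  have hiodd : Odd i := by
    by_contra hev
    rw [Nat.not_odd_iff_even] at hev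
    have : μ ^ m = 1 := by
      rw [← hξ, ← pow_mul, mul_comm i m, pow_mul, zeta_pow_m hm, hev.neg_one_pow]
    rw [h] at this
    exact (by norm_num : (-1 : ℂ) ≠ 1) this
  have hipos : 0 < i := hiodd.pos
  refine ⟨(i : ℤ), by exact_mod_cast hiodd, by exact_mod_cast hipos, by exact_mod_cast hi, ?_⟩
  rw [zpow_natCast, hξ]

end Zeta

section LinAlg
variable {V : Type*} [AddCommGroup V] [Module ℂ V]

lemma exists_common_eigenvector [FiniteDimensional ℂ V] [Nontrivial V]
    (a b : Module.End ℂ V) (hab : ∀ v, a (b v) = b (a v)) :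
    ∃ (μ ν : ℂ) (v : V), v ≠ 0 ∧ a v = μ • v ∧ b v = ν • v := by
  obtain ⟨μ, hμ⟩ := Module.End.exists_eigenvalue a
  set E := Module.End.eigenspace a μ with hE
  have hbE : ∀ x ∈ E, b x ∈ E := by
    intro x hx
    rw [Module.End.mem_eigenspace_iff] at hx ⊢
    rw [hab, hx, map_smul]
  have : Nontrivial E := Submodule.nontrivial_iff_ne_bot.mpr hμ
  obtain ⟨ν, hν⟩ := Module.End.exists_eigenvalue (b.restrict hbE)
  obtain ⟨x, hx⟩ := hν.exists_hasEigenvector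
  refine ⟨μ, ν, (x : V), ?_, ?_, ?_⟩
  · simpa [Submodule.coe_eq_zero] using hx.right
  · exact Module.End.mem_eigenspace_iff.mp x.2
  · have := hx.apply_eq_smul
    have h2 := congrArg (Subtype.val) this
    simpa using h2

lemma rho_inv_apply {G : Type*} [Group G] (ρ : Representation ℂ G V) (g : G) (v : V) :
    ρ g⁻¹ (ρ g v) = v := by
  rw [← Module.End.mul_apply, ← map_mul, inv_mul_cancel, map_one, Module.End.one_apply]

lemma eigen_inv {G : Type*} [Group G] (ρ : Representation ℂ G V) (g : G) {v : V} {μ : ℂ}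
    (hμ : μ ≠ 0) (h : ρ g v = μ • v) : ρ g⁻¹ v = μ⁻¹ • v := by
  have h1 : ρ g⁻¹ (ρ g v) = v := rho_inv_apply ρ g v
  rw [h, map_smul] at h1
  have : μ⁻¹ • (μ • ρ g⁻¹ v) = μ⁻¹ • v := by rw [h1]
  rwa [smul_smul, inv_mul_cancel₀ hμ, one_smul] at this

lemma inv_invariant [FiniteDimensional ℂ V] {G : Type*} [Group G] (ρ : Representation ℂ G V)
    (p : Submodule ℂ V) (g : G) (h : ∀ v ∈ p, ρ g v ∈ p) : ∀ v ∈ p, ρ g⁻¹ v ∈ p := by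
  intro v hv
  have hinj : Function.Injective ((ρ g).restrict (fun x hx => h x hx)) := by
    intro u w huw
    have h2 : ρ g (u : V) = ρ g (w : V) := congrArg Subtype.val huw
    have h3 := congrArg (ρ g⁻¹) h2
    rw [rho_inv_apply, rho_inv_apply] at h3
    exact Subtype.ext h3
  have hsurj := (LinearMap.injective_iff_surjective).mp hinj
  obtain ⟨x, hx⟩ := hsurj ⟨v, hv⟩
  have hx' : ρ g (x : V) = v := congrArg Subtype.val hx
  have : ρ g⁻¹ v = (x : V) := by rw [← hx', rho_inv_apply]
  rw [this]; exact x.2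

lemma invariant_all {m1 m2 : ℕ} [FiniteDimensional ℂ V] (ρ : Representation ℂ (Wt m1 m2) V)
    (p : Submodule ℂ V) (hgen : ∀ x : Gen, ∀ v ∈ p, ρ (PresentedGroup.of x) v ∈ p) :
    ∀ g, ∀ v ∈ p, ρ g v ∈ p := by
  let H : Subgroup (Wt m1 m2) :=
    { carrier := {g | ∀ v ∈ p, ρ g v ∈ p}
      one_mem' := by intro v hv; rw [map_one]; simpa using hv
      mul_mem' := by
        intro a b ha hb v hv
        rw [map_mul, Module.End.mul_apply]
        exact ha _ (hb v hv)
      inv_mem' := by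
        intro a ha
        exact inv_invariant ρ p a ha }
  intro g
  exact PresentedGroup.generated_by _ H hgen g

lemma intertwine_all {m1 m2 n : ℕ} (ρ : Representation ℂ (Wt m1 m2) V)
    (ρ' : Wt m1 m2 →* GL (Fin n) ℂ) (T : V ≃ₗ[ℂ] (Fin n → ℂ))
    (hgen : ∀ x : Gen, ∀ v : V, T (ρ (PresentedGroup.of x) v)
      = Matrix.mulVec (ρ' (PresentedGroup.of x) : Matrix (Fin n) (Fin n) ℂ) (T v)) :
    ∀ (g : Wt m1 m2) (v : V),
      T (ρ g v) = Matrix.mulVec (ρ' g : Matrix (Fin n) (Fin n) ℂ) (T v) := by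
  let H : Subgroup (Wt m1 m2) :=
    { carrier := {g | ∀ v : V, T (ρ g v) = Matrix.mulVec (ρ' g : Matrix (Fin n) (Fin n) ℂ) (T v)}
      one_mem' := by
        intro v
        rw [map_one, map_one, Module.End.one_apply, Units.val_one, Matrix.one_mulVec]
      mul_mem' := by
        intro a b ha hb v
        rw [map_mul, map_mul, Module.End.mul_apply, ha, hb, Units.val_mul, Matrix.mulVec_mulVec]
      inv_mem' := by
        intro a ha v
        have hv : ρ a (ρ a⁻¹ v) = v := by
          rw [← Module.End.mul_apply, ← map_mul, mul_inv_cancel, map_one, Module.End.one_apply]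
        have h1 : T v = Matrix.mulVec (ρ' a : Matrix (Fin n) (Fin n) ℂ) (T (ρ a⁻¹ v)) := by
          rw [← ha (ρ a⁻¹ v), hv]
        rw [h1, Matrix.mulVec_mulVec, ← Units.val_mul, ← map_mul, inv_mul_cancel, map_one,
          Units.val_one, Matrix.one_mulVec] }
  intro g
  exact PresentedGroup.generated_by _ H hgen g

end LinAlg
section Reps

/-- A matrix which is its own inverse, as a `GL`. -/
def mkInv {n : ℕ} (M : Matrix (Fin n) (Fin n) ℂ) (h : M * M = 1) : GL (Fin n) ℂ := ⟨M, M, h, h⟩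

def mkUnit {n : ℕ} (M N : Matrix (Fin n) (Fin n) ℂ) (h : M * N = 1) (h' : N * M = 1) :
    GL (Fin n) ℂ := ⟨M, N, h, h'⟩

@[simp] lemma mkInv_val {n : ℕ} (M : Matrix (Fin n) (Fin n) ℂ) (h : M * M = 1) :
    (mkInv M h : Matrix (Fin n) (Fin n) ℂ) = M := rfl

@[simp] lemma mkUnit_val {n : ℕ} (M N : Matrix (Fin n) (Fin n) ℂ) (h : M * N = 1)
    (h' : N * M = 1) : (mkUnit M N h h' : Matrix (Fin n) (Fin n) ℂ) = M := rfl

lemma zeta_mul_zeta_neg {m : ℕ} (ℓ : ℤ) : ζ m ^ ℓ * ζ m ^ (-ℓ) = 1 := by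
  rw [← zpow_add₀ (zeta_ne_zero m)]; simp

lemma diag_mul_diag_one {n : ℕ} {d e : Fin n → ℂ} (h : ∀ i, d i * e i = 1) :
    Matrix.diagonal d * Matrix.diagonal e = 1 := by
  rw [Matrix.diagonal_mul_diagonal]
  ext i j
  rcases eq_or_ne i j with rfl | hij
  · simp [h]
  · simp [Matrix.diagonal_apply_ne _ hij, Matrix.one_apply_ne hij]

lemma diag_eq_neg_one {n : ℕ} {d : Fin n → ℂ} (h : ∀ i, d i = -1) :
    Matrix.diagonal d = -1 := by
  ext i j
  rcases eq_or_ne i j with rfl | hij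
  · simp [h]
  · simp [Matrix.diagonal_apply_ne _ hij, Matrix.one_apply_ne hij]

lemma exists_repU2First (m1 m2 : ℕ) (hm1 : Odd m1) (hm2 : 1 ≤ m2) {ℓ2 : ℤ} (hl2 : Odd ℓ2) :
    ∃ ρ' : Wt m1 m2 →* GL (Fin 2) ℂ, IsU2First m1 m2 ℓ2 ρ' := by
  have hz2 := zeta_ne_zero m2
  have hinv : ζ m2 ^ ℓ2 * ζ m2 ^ (-ℓ2) = 1 := zeta_mul_zeta_neg ℓ2
  have hinv' : ζ m2 ^ (-ℓ2) * ζ m2 ^ ℓ2 = 1 := by rw [mul_comm]; exact hinv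
  have hc : ζ m2 ^ ℓ2 * (ζ m2 ^ ℓ2)⁻¹ = 1 := mul_inv_cancel₀ (zpow_ne_zero _ hz2)
  have hc' : (ζ m2 ^ ℓ2)⁻¹ * ζ m2 ^ ℓ2 = 1 := inv_mul_cancel₀ (zpow_ne_zero _ hz2)
  have hf1 : (!![1, 0; 0, -1] : Matrix (Fin 2) (Fin 2) ℂ) * !![1, 0; 0, -1] = 1 := by
    rw [Matrix.mul_fin_two]; norm_num; rw [← Matrix.one_fin_two]
  have hf2 : (!![0, 1; 1, 0] : Matrix (Fin 2) (Fin 2) ℂ) * !![0, 1; 1, 0] = 1 := by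
    rw [Matrix.mul_fin_two]; norm_num; rw [← Matrix.one_fin_two]
  have hr2 : Matrix.diagonal ![ζ m2 ^ ℓ2, ζ m2 ^ (-ℓ2)] *
      Matrix.diagonal ![ζ m2 ^ (-ℓ2), ζ m2 ^ ℓ2] = 1 := by
    refine diag_mul_diag_one ?_
    intro i; fin_cases i <;> simp [hc, hc']
  have hr2' : Matrix.diagonal ![ζ m2 ^ (-ℓ2), ζ m2 ^ ℓ2] *
      Matrix.diagonal ![ζ m2 ^ ℓ2, ζ m2 ^ (-ℓ2)] = 1 := by
    refine diag_mul_diag_one ?_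
    intro i; fin_cases i <;> simp [hc, hc']
  let f : Gen → GL (Fin 2) ℂ := fun x => match x with
    | Gen.z => -1
    | Gen.r1 => -1
    | Gen.f1 => mkInv _ hf1
    | Gen.r2 => mkUnit _ _ hr2 hr2'
    | Gen.f2 => mkInv _ hf2
  have hrels : ∀ r ∈ rels m1 m2, FreeGroup.lift f r = 1 := by
    intro r hr
    simp only [rels, Set.mem_insert_iff, Set.mem_singleton_iff] at hr
    rcases hr with rfl|rfl|rfl|rfl|rfl|rfl|rfl|rfl|rfl|rfl|rfl <;>
      simp only [map_mul, map_pow, map_inv, FreeGroup.lift_apply_of, f]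
    · -- r1^m1 * z⁻¹
      rw [hm1.neg_one_pow]; simp
    · -- r2^m2 * z⁻¹
      rw [mul_inv_eq_one]
      refine Units.ext ?_
      rw [Units.val_pow_eq_pow_val, mkUnit_val, Matrix.diagonal_pow]
      have : ((-1 : GL (Fin 2) ℂ) : Matrix (Fin 2) (Fin 2) ℂ) = -1 := by
        simp
      rw [this]
      refine diag_eq_neg_one ?_
      intro i
      fin_cases i <;> simp only [Pi.pow_apply] <;>
        first
        | simpa using zeta_zpow_m hm2 hl2
        | simpa using zeta_zpow_m hm2 hl2.neg
    · -- f1^2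
      refine Units.ext ?_
      rw [Units.val_pow_eq_pow_val, mkInv_val, sq, hf1, Units.val_one]
    · refine Units.ext ?_
      rw [Units.val_pow_eq_pow_val, mkInv_val, sq, hf2, Units.val_one]
    · -- (r1 f1)^2
      rw [neg_one_mul, neg_sq]
      refine Units.ext ?_
      rw [Units.val_pow_eq_pow_val, mkInv_val, sq, hf1, Units.val_one]
    · -- (r2 f2)^2
      refine Units.ext ?_
      rw [Units.val_pow_eq_pow_val, Units.val_mul, mkUnit_val, mkInv_val, Units.val_one, sq]
      ext i j
      fin_cases i <;> fin_cases j <;>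
        simp [Matrix.mul_apply, Fin.sum_univ_two, Matrix.diagonal, Matrix.one_apply, hc, hc']
    · -- r1 r2 comm
      rw [mul_inv_eq_one, neg_one_mul, mul_neg_one]
    · rw [mul_inv_eq_one, neg_one_mul, mul_neg_one]
    · -- r2 f1 comm
      rw [mul_inv_eq_one]
      refine Units.ext ?_
      rw [Units.val_mul, Units.val_mul, mkUnit_val, mkInv_val]
      ext i j
      fin_cases i <;> fin_cases j <;>
        simp [Matrix.mul_apply, Fin.sum_univ_two, Matrix.diagonal]
    · -- (f1 f2)^2 = z
      rw [mul_inv_eq_one]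
      refine Units.ext ?_
      rw [Units.val_pow_eq_pow_val, Units.val_mul, mkInv_val, mkInv_val, sq]
      have : ((-1 : GL (Fin 2) ℂ) : Matrix (Fin 2) (Fin 2) ℂ) = -1 := by simp
      rw [this]
      ext i j
      fin_cases i <;> fin_cases j <;>
        simp [Matrix.mul_apply, Fin.sum_univ_two, Matrix.one_apply]
    · -- z^2
      rw [neg_one_sq]
  refine ⟨PresentedGroup.toGroup hrels, ?_, ?_, ?_, ?_, ?_⟩ <;>
    simp only [wf1, wf2, wr1, wr2, wz, PresentedGroup.toGroup.of, f] <;>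
    simp

end Reps
section RepsSecond

lemma exists_repU2Second (m1 m2 : ℕ) (hm1 : 1 ≤ m1) (hm2 : Odd m2) {ℓ1 : ℤ} (hl1 : Odd ℓ1) :
    ∃ ρ' : Wt m1 m2 →* GL (Fin 2) ℂ, IsU2Second m1 m2 ℓ1 ρ' := by
  have hz1 := zeta_ne_zero m1
  have hc : ζ m1 ^ ℓ1 * (ζ m1 ^ ℓ1)⁻¹ = 1 := mul_inv_cancel₀ (zpow_ne_zero _ hz1)
  have hc' : (ζ m1 ^ ℓ1)⁻¹ * ζ m1 ^ ℓ1 = 1 := inv_mul_cancel₀ (zpow_ne_zero _ hz1)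
  have hf2 : (!![1, 0; 0, -1] : Matrix (Fin 2) (Fin 2) ℂ) * !![1, 0; 0, -1] = 1 := by
    rw [Matrix.mul_fin_two]; norm_num; rw [← Matrix.one_fin_two]
  have hf1 : (!![0, 1; 1, 0] : Matrix (Fin 2) (Fin 2) ℂ) * !![0, 1; 1, 0] = 1 := by
    rw [Matrix.mul_fin_two]; norm_num; rw [← Matrix.one_fin_two]
  have hr1 : Matrix.diagonal ![ζ m1 ^ ℓ1, ζ m1 ^ (-ℓ1)] *
      Matrix.diagonal ![ζ m1 ^ (-ℓ1), ζ m1 ^ ℓ1] = 1 := by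
    refine diag_mul_diag_one ?_
    intro i; fin_cases i <;> simp [hc, hc']
  have hr1' : Matrix.diagonal ![ζ m1 ^ (-ℓ1), ζ m1 ^ ℓ1] *
      Matrix.diagonal ![ζ m1 ^ ℓ1, ζ m1 ^ (-ℓ1)] = 1 := by
    refine diag_mul_diag_one ?_
    intro i; fin_cases i <;> simp [hc, hc']
  let f : Gen → GL (Fin 2) ℂ := fun x => match x with
    | Gen.z => -1
    | Gen.r1 => mkUnit _ _ hr1 hr1'
    | Gen.f1 => mkInv _ hf1
    | Gen.r2 => -1
    | Gen.f2 => mkInv _ hf2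
  have hrels : ∀ r ∈ rels m1 m2, FreeGroup.lift f r = 1 := by
    intro r hr
    simp only [rels, Set.mem_insert_iff, Set.mem_singleton_iff] at hr
    rcases hr with rfl|rfl|rfl|rfl|rfl|rfl|rfl|rfl|rfl|rfl|rfl <;>
      simp only [map_mul, map_pow, map_inv, FreeGroup.lift_apply_of, f]
    · -- r1^m1 * z⁻¹
      rw [mul_inv_eq_one]
      refine Units.ext ?_
      rw [Units.val_pow_eq_pow_val, mkUnit_val, Matrix.diagonal_pow]
      have : ((-1 : GL (Fin 2) ℂ) : Matrix (Fin 2) (Fin 2) ℂ) = -1 := by simp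
      rw [this]
      refine diag_eq_neg_one ?_
      intro i
      fin_cases i <;> simp only [Pi.pow_apply] <;>
        first
        | simpa using zeta_zpow_m hm1 hl1
        | simpa using zeta_zpow_m hm1 hl1.neg
    · -- r2^m2 * z⁻¹
      rw [hm2.neg_one_pow]; simp
    · -- f1^2
      refine Units.ext ?_
      rw [Units.val_pow_eq_pow_val, mkInv_val, sq, hf1, Units.val_one]
    · refine Units.ext ?_
      rw [Units.val_pow_eq_pow_val, mkInv_val, sq, hf2, Units.val_one]
    · -- (r1 f1)^2
      refine Units.ext ?_
      rw [Units.val_pow_eq_pow_val, Units.val_mul, mkUnit_val, mkInv_val, sq]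
      ext i j
      fin_cases i <;> fin_cases j <;>
        simp [Matrix.mul_apply, Fin.sum_univ_two, Matrix.diagonal, Matrix.one_apply, hc, hc']
    · -- (r2 f2)^2
      rw [neg_one_mul, neg_sq]
      refine Units.ext ?_
      rw [Units.val_pow_eq_pow_val, mkInv_val, sq, hf2, Units.val_one]
    · -- r1 r2 comm
      rw [mul_inv_eq_one, mul_neg_one, neg_one_mul]
    · -- r1 f2 comm
      rw [mul_inv_eq_one]
      refine Units.ext ?_
      rw [Units.val_mul, Units.val_mul, mkUnit_val, mkInv_val]
      ext i j
      fin_cases i <;> fin_cases j <;>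
        simp [Matrix.mul_apply, Fin.sum_univ_two, Matrix.diagonal]
    · -- r2 f1 comm
      rw [mul_inv_eq_one, neg_one_mul, mul_neg_one]
    · -- (f1 f2)^2 = z
      rw [mul_inv_eq_one]
      refine Units.ext ?_
      rw [Units.val_pow_eq_pow_val, Units.val_mul, mkInv_val, mkInv_val, sq]
      have : ((-1 : GL (Fin 2) ℂ) : Matrix (Fin 2) (Fin 2) ℂ) = -1 := by simp
      rw [this]
      ext i j
      fin_cases i <;> fin_cases j <;>
        simp [Matrix.mul_apply, Fin.sum_univ_two, Matrix.one_apply]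
    · -- z^2
      rw [neg_one_sq]
  refine ⟨PresentedGroup.toGroup hrels, ?_, ?_, ?_, ?_, ?_⟩ <;>
    simp only [wf1, wf2, wr1, wr2, wz, PresentedGroup.toGroup.of, f] <;>
    simp

end RepsSecond
section RepsFour

set_option maxHeartbeats 2000000 in
lemma exists_repU4 (m1 m2 : ℕ) (hm1 : 1 ≤ m1) (hm2 : 1 ≤ m2) {ℓ1 ℓ2 : ℤ}
    (hl1 : Odd ℓ1) (hl2 : Odd ℓ2) :
    ∃ ρ' : Wt m1 m2 →* GL (Fin 4) ℂ, IsU4 m1 m2 ℓ1 ℓ2 ρ' := by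
  have hz1 := zeta_ne_zero m1
  have hz2 := zeta_ne_zero m2
  have hc1 : ζ m1 ^ ℓ1 * (ζ m1 ^ ℓ1)⁻¹ = 1 := mul_inv_cancel₀ (zpow_ne_zero _ hz1)
  have hc1' : (ζ m1 ^ ℓ1)⁻¹ * ζ m1 ^ ℓ1 = 1 := inv_mul_cancel₀ (zpow_ne_zero _ hz1)
  have hc2 : ζ m2 ^ ℓ2 * (ζ m2 ^ ℓ2)⁻¹ = 1 := mul_inv_cancel₀ (zpow_ne_zero _ hz2)
  have hc2' : (ζ m2 ^ ℓ2)⁻¹ * ζ m2 ^ ℓ2 = 1 := inv_mul_cancel₀ (zpow_ne_zero _ hz2)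
  have hF1 : F1 * F1 = 1 := by
    ext i j
    fin_cases i <;> fin_cases j <;>
      simp [F1, Matrix.mul_apply, Fin.sum_univ_four, Matrix.one_apply, Matrix.vecHead,
        Matrix.vecTail]
  have hF2 : F2 * F2 = 1 := by
    ext i j
    fin_cases i <;> fin_cases j <;>
      simp [F2, Matrix.mul_apply, Fin.sum_univ_four, Matrix.one_apply, Matrix.vecHead,
        Matrix.vecTail]
  have hR1 : R1 m1 ℓ1 * R1 m1 (-ℓ1) = 1 := by
    refine diag_mul_diag_one ?_
    intro i; fin_cases i <;> simp [hc1, hc1']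
  have hR1' : R1 m1 (-ℓ1) * R1 m1 ℓ1 = 1 := by
    have h : ∀ i, (![ζ m1 ^ (-ℓ1), ζ m1 ^ (-(-ℓ1)), ζ m1 ^ (-ℓ1), ζ m1 ^ (-(-ℓ1))] i) *
        (![ζ m1 ^ ℓ1, ζ m1 ^ (-ℓ1), ζ m1 ^ ℓ1, ζ m1 ^ (-ℓ1)] i) = 1 := by
      intro i; fin_cases i <;> simp [hc1, hc1']
    exact diag_mul_diag_one h
  have hR2 : R2 m2 ℓ2 * R2 m2 (-ℓ2) = 1 := by
    refine diag_mul_diag_one ?_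
    intro i; fin_cases i <;> simp [hc2, hc2']
  have hR2' : R2 m2 (-ℓ2) * R2 m2 ℓ2 = 1 := by
    have h : ∀ i, (![ζ m2 ^ (-ℓ2), ζ m2 ^ (-ℓ2), ζ m2 ^ (-(-ℓ2)), ζ m2 ^ (-(-ℓ2))] i) *
        (![ζ m2 ^ ℓ2, ζ m2 ^ ℓ2, ζ m2 ^ (-ℓ2), ζ m2 ^ (-ℓ2)] i) = 1 := by
      intro i; fin_cases i <;> simp [hc2, hc2']
    exact diag_mul_diag_one h
  let f : Gen → GL (Fin 4) ℂ := fun x => match x with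
    | Gen.z => -1
    | Gen.r1 => mkUnit _ _ hR1 hR1'
    | Gen.f1 => mkInv _ hF1
    | Gen.r2 => mkUnit _ _ hR2 hR2'
    | Gen.f2 => mkInv _ hF2
  have hrels : ∀ r ∈ rels m1 m2, FreeGroup.lift f r = 1 := by
    intro r hr
    simp only [rels, Set.mem_insert_iff, Set.mem_singleton_iff] at hr
    have hneg : ((-1 : GL (Fin 4) ℂ) : Matrix (Fin 4) (Fin 4) ℂ) = -1 := by simp
    rcases hr with rfl|rfl|rfl|rfl|rfl|rfl|rfl|rfl|rfl|rfl|rfl <;>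
      simp only [map_mul, map_pow, map_inv, FreeGroup.lift_apply_of, f]
    · -- r1^m1 * z⁻¹
      rw [mul_inv_eq_one]
      refine Units.ext ?_
      rw [Units.val_pow_eq_pow_val, mkUnit_val, hneg, R1, Matrix.diagonal_pow]
      refine diag_eq_neg_one ?_
      intro i
      fin_cases i <;> simp only [Pi.pow_apply] <;>
        first
        | simpa using zeta_zpow_m hm1 hl1
        | simpa using zeta_zpow_m hm1 hl1.neg
    · -- r2^m2 * z⁻¹
      rw [mul_inv_eq_one]
      refine Units.ext ?_
      rw [Units.val_pow_eq_pow_val, mkUnit_val, hneg, R2, Matrix.diagonal_pow]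
      refine diag_eq_neg_one ?_
      intro i
      fin_cases i <;> simp only [Pi.pow_apply] <;>
        first
        | simpa using zeta_zpow_m hm2 hl2
        | simpa using zeta_zpow_m hm2 hl2.neg
    · -- f1^2
      refine Units.ext ?_
      rw [Units.val_pow_eq_pow_val, mkInv_val, sq, hF1, Units.val_one]
    · refine Units.ext ?_
      rw [Units.val_pow_eq_pow_val, mkInv_val, sq, hF2, Units.val_one]
    · -- (r1 f1)^2
      refine Units.ext ?_
      rw [Units.val_pow_eq_pow_val, Units.val_mul, mkUnit_val, mkInv_val, sq]
      ext i j
      fin_cases i <;> fin_cases j <;>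
        simp [R1, F1, Matrix.mul_apply, Fin.sum_univ_four, Matrix.diagonal, Matrix.one_apply,
          Matrix.vecHead, Matrix.vecTail, hc1, hc1']
    · -- (r2 f2)^2
      refine Units.ext ?_
      rw [Units.val_pow_eq_pow_val, Units.val_mul, mkUnit_val, mkInv_val, sq]
      ext i j
      fin_cases i <;> fin_cases j <;>
        simp [R2, F2, Matrix.mul_apply, Fin.sum_univ_four, Matrix.diagonal, Matrix.one_apply,
          Matrix.vecHead, Matrix.vecTail, hc2, hc2']
    · -- r1 r2 comm
      rw [mul_inv_eq_one]
      refine Units.ext ?_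
      rw [Units.val_mul, Units.val_mul, mkUnit_val, mkUnit_val]
      ext i j
      fin_cases i <;> fin_cases j <;>
        simp [R1, R2, Matrix.mul_apply, Fin.sum_univ_four, Matrix.diagonal, Matrix.vecHead,
          Matrix.vecTail, mul_comm]
    · -- r1 f2 comm
      rw [mul_inv_eq_one]
      refine Units.ext ?_
      rw [Units.val_mul, Units.val_mul, mkUnit_val, mkInv_val]
      ext i j
      fin_cases i <;> fin_cases j <;>
        simp [R1, F2, Matrix.mul_apply, Fin.sum_univ_four, Matrix.diagonal, Matrix.vecHead,
          Matrix.vecTail]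
    · -- r2 f1 comm
      rw [mul_inv_eq_one]
      refine Units.ext ?_
      rw [Units.val_mul, Units.val_mul, mkUnit_val, mkInv_val]
      ext i j
      fin_cases i <;> fin_cases j <;>
        simp [R2, F1, Matrix.mul_apply, Fin.sum_univ_four, Matrix.diagonal, Matrix.vecHead,
          Matrix.vecTail]
    · -- (f1 f2)^2 = z
      rw [mul_inv_eq_one]
      refine Units.ext ?_
      rw [Units.val_pow_eq_pow_val, Units.val_mul, mkInv_val, mkInv_val, sq, hneg]
      ext i j
      fin_cases i <;> fin_cases j <;>
        simp [F1, F2, Matrix.mul_apply, Fin.sum_univ_four, Matrix.one_apply, Matrix.vecHead,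
          Matrix.vecTail]
    · -- z^2
      rw [neg_one_sq]
  refine ⟨PresentedGroup.toGroup hrels, ?_, ?_, ?_, ?_, ?_⟩ <;>
    simp only [wf1, wf2, wr1, wr2, wz, PresentedGroup.toGroup.of, f] <;>
    simp

end RepsFour
section Actions
variable {m1 m2 : ℕ} {V : Type*} [AddCommGroup V] [Module ℂ V]
variable (ρ : Representation ℂ (Wt m1 m2) V)

lemma act_f1_f1 : ∀ u, ρ (wf1 m1 m2) (ρ (wf1 m1 m2) u) = u := by
  intro u
  rw [← Module.End.mul_apply, ← map_mul, wf1_sq, map_one, Module.End.one_apply]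

lemma act_f2_f2 : ∀ u, ρ (wf2 m1 m2) (ρ (wf2 m1 m2) u) = u := by
  intro u
  rw [← Module.End.mul_apply, ← map_mul, wf2_sq, map_one, Module.End.one_apply]

lemma act_r1_f1 : ∀ u, ρ (wr1 m1 m2) (ρ (wf1 m1 m2) u)
    = ρ (wf1 m1 m2) (ρ ((wr1 m1 m2)⁻¹) u) := by
  intro u
  rw [← Module.End.mul_apply, ← map_mul, wr1_wf1, map_mul, Module.End.mul_apply]

lemma act_r2_f2 : ∀ u, ρ (wr2 m1 m2) (ρ (wf2 m1 m2) u)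
    = ρ (wf2 m1 m2) (ρ ((wr2 m1 m2)⁻¹) u) := by
  intro u
  rw [← Module.End.mul_apply, ← map_mul, wr2_wf2, map_mul, Module.End.mul_apply]

lemma act_r1_r2 : ∀ u, ρ (wr1 m1 m2) (ρ (wr2 m1 m2) u) = ρ (wr2 m1 m2) (ρ (wr1 m1 m2) u) := by
  intro u
  rw [← Module.End.mul_apply, ← map_mul, rel_c12, map_mul, Module.End.mul_apply]

lemma act_r1_f2 : ∀ u, ρ (wr1 m1 m2) (ρ (wf2 m1 m2) u) = ρ (wf2 m1 m2) (ρ (wr1 m1 m2) u) := by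
  intro u
  rw [← Module.End.mul_apply, ← map_mul, rel_c1f2, map_mul, Module.End.mul_apply]

lemma act_r2_f1 : ∀ u, ρ (wr2 m1 m2) (ρ (wf1 m1 m2) u) = ρ (wf1 m1 m2) (ρ (wr2 m1 m2) u) := by
  intro u
  rw [← Module.End.mul_apply, ← map_mul, rel_c2f1, map_mul, Module.End.mul_apply]

lemma act_z (hz : ρ (wz m1 m2) = -1) : ∀ u, ρ (wz m1 m2) u = -u := by
  intro u; rw [hz]; simp

lemma act_f2_f1 (hz : ρ (wz m1 m2) = -1) :
    ∀ u, ρ (wf2 m1 m2) (ρ (wf1 m1 m2) u) = -ρ (wf1 m1 m2) (ρ (wf2 m1 m2) u) := by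
  intro u
  rw [← Module.End.mul_apply, ← map_mul, wf2_wf1, map_mul, map_mul, Module.End.mul_apply,
    Module.End.mul_apply, act_z ρ hz, map_neg]

lemma rho_ne_zero (g : Wt m1 m2) {v : V} (hv : v ≠ 0) : ρ g v ≠ 0 := by
  intro h
  apply hv
  have := congrArg (ρ g⁻¹) h
  rwa [rho_inv_apply, map_zero] at this

lemma end_pow_eigen (a : Module.End ℂ V) {v : V} {μ : ℂ} (h : a v = μ • v) :
    ∀ n : ℕ, (a ^ n) v = μ ^ n • v := by
  intro n
  induction n with
  | zero => simp
  | succ k ih =>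
    rw [pow_succ, Module.End.mul_apply, h, map_smul, ih, smul_smul, ← pow_succ']

lemma eigen_pair_zero {a : Module.End ℂ V} {x y : V} {μ κ : ℂ} (hμκ : μ ≠ κ)
    (hx : a x = μ • x) (hy : a y = κ • y) (hsum : x + y = 0) : x = 0 ∧ y = 0 := by
  have hyx : y = -x := eq_neg_of_add_eq_zero_right hsum
  rw [hyx, map_neg, hx, ← smul_neg] at hy
  have h2 : (μ - κ) • (-x) = 0 := by
    rw [sub_smul, hy]; abel
  rcases smul_eq_zero.mp h2 with h | h
  · exact absurd (sub_eq_zero.mp h) hμκ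
  · have hx0 : x = 0 := by simpa using h
    exact ⟨hx0, by rw [hyx, hx0, neg_zero]⟩

lemma scalar_eq_of_smul {v : V} (hv : v ≠ 0) {c d : ℂ} (h : c • v = d • v) : c = d := by
  by_contra hne
  have h2 : (c - d) • v = 0 := by rw [sub_smul, h]; abel
  rcases smul_eq_zero.mp h2 with h3 | h3
  · exact hne (sub_eq_zero.mp h3)
  · exact hv h3

lemma eigen_of_pow_neg_one (hz : ρ (wz m1 m2) = -1) {v : V} (hv : v ≠ 0) {μ : ℂ}
    (h : ρ (wr1 m1 m2) v = μ • v) : μ ^ m1 = -1 := by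
  have hp : (ρ (wr1 m1 m2) ^ m1) v = μ ^ m1 • v := end_pow_eigen _ h m1
  rw [← map_pow, rel_r1, hz] at hp
  have : μ ^ m1 • v = (-1 : ℂ) • v := by
    simpa using hp.symm
  exact scalar_eq_of_smul hv this

lemma eigen_of_pow_neg_one' (hz : ρ (wz m1 m2) = -1) {v : V} (hv : v ≠ 0) {μ : ℂ}
    (h : ρ (wr2 m1 m2) v = μ • v) : μ ^ m2 = -1 := by
  have hp : (ρ (wr2 m1 m2) ^ m2) v = μ ^ m2 • v := end_pow_eigen _ h m2
  rw [← map_pow, rel_r2, hz] at hp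
  have : μ ^ m2 • v = (-1 : ℂ) • v := by
    simpa using hp.symm
  exact scalar_eq_of_smul hv this

lemma zeta_prim {m : ℕ} (hm : 1 ≤ m) : IsPrimitiveRoot (ζ m) (2 * m) := by
  have h2m : (2 * m : ℕ) ≠ 0 := by omega
  have := Complex.isPrimitiveRoot_exp (2 * m) h2m
  convert this using 2
  rw [ζ]
  push_cast
  rw [mul_comm (2:ℂ)]
  ring_nf

lemma zeta_zpow_ne_one {m : ℕ} (hm : 1 ≤ m) {k : ℤ} (h0 : 0 < k) (h1 : k < 2 * m) :
    ζ m ^ k ≠ 1 := by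
  intro h
  have hdvd : (2 * m : ℤ) ∣ k := (zeta_prim hm).zpow_eq_one_iff_dvd k |>.mp h
  have := Int.le_of_dvd h0 hdvd
  omega

lemma zeta_fold {m : ℕ} (hm : 1 ≤ m) (ℓ : ℤ) : (ζ m ^ ℓ)⁻¹ = ζ m ^ (2 * (m:ℤ) - ℓ) := by
  rw [sub_eq_add_neg, zpow_add₀ (zeta_ne_zero m), ← zpow_neg]
  have : ζ m ^ (2 * (m:ℤ)) = 1 := by
    have := zeta_zpow_two_m hm
    simpa using this
  rw [this, one_mul]

end Actions

section Case2
variable {m1 m2 : ℕ} {V : Type*} [AddCommGroup V] [Module ℂ V]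
variable [FiniteDimensional ℂ V] [Nontrivial V]

lemma case2First (ρ : Representation ℂ (Wt m1 m2) V) (h2 : 1 ≤ m2)
    (hz : ρ (wz m1 m2) = -1)
    (hirr : ∀ p : Submodule ℂ V, (∀ g : Wt m1 m2, ∀ v ∈ p, ρ g v ∈ p) → p = ⊥ ∨ p = ⊤)
    (hm1odd : Odd m1) {ℓ2 : ℤ} (hl2 : Odd ℓ2) (hb : 0 < ℓ2) (hb' : ℓ2 < 2 * m2)
    {u : V} (hu : u ≠ 0)
    (hr1 : ∀ x : V, ρ (wr1 m1 m2) x = -x)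
    (hf1u : ρ (wf1 m1 m2) u = u)
    (hbu : ρ (wr2 m1 m2) u = ζ m2 ^ ℓ2 • u) :
    ∃ ρ' : Wt m1 m2 →* GL (Fin 2) ℂ, IsU2First m1 m2 ℓ2 ρ' ∧ EquivTo2 ρ ρ' := by
  have hν0 : ζ m2 ^ ℓ2 ≠ 0 := zpow_ne_zero _ (zeta_ne_zero m2)
  set u' := ρ (wf2 m1 m2) u with hu'def
  have hu' : u' ≠ 0 := rho_ne_zero ρ _ hu
  have hGu' : ρ (wf2 m1 m2) u' = u := act_f2_f2 ρ u
  have hFu' : ρ (wf1 m1 m2) u' = -u' := by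
    have h := act_f2_f1 ρ hz u
    rw [hf1u, ← hu'def] at h
    have hadd : u' + ρ (wf1 m1 m2) u' = 0 := by nth_rewrite 1 [h]; abel
    have h2 := add_eq_zero_iff_neg_eq.mp hadd
    exact h2.symm
  have hbinvu : ρ ((wr2 m1 m2)⁻¹) u = (ζ m2 ^ ℓ2)⁻¹ • u := eigen_inv ρ _ hν0 hbu
  have hbu' : ρ (wr2 m1 m2) u' = ζ m2 ^ (-ℓ2) • u' := by
    rw [hu'def, act_r2_f2 ρ u, hbinvu, map_smul, zpow_neg]
  have hzu : ∀ x, ρ (wz m1 m2) x = -x := act_z ρ hz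
  set e : Fin 2 → V := ![u, u'] with he
  have hFe : ∀ c : ℂ, ρ (wf1 m1 m2) (c • u') = (-1 : ℂ) • (c • u') := by
    intro c
    rw [map_smul, hFu', smul_comm]; simp
  have li : LinearIndependent ℂ e := by
    rw [Fintype.linearIndependent_iff]
    intro c hc
    rw [Fin.sum_univ_two] at hc
    have hc' : c 0 • u + c 1 • u' = 0 := hc
    have hx : ρ (wf1 m1 m2) (c 0 • u) = (1 : ℂ) • (c 0 • u) := by
      rw [map_smul, hf1u, one_smul]
    have hpair := eigen_pair_zero (by norm_num : (1 : ℂ) ≠ -1) hx (hFe (c 1)) hc'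
    intro i
    fin_cases i
    · rcases smul_eq_zero.mp hpair.1 with h | h
      · exact h
      · exact absurd h hu
    · rcases smul_eq_zero.mp hpair.2 with h | h
      · exact h
      · exact absurd h hu'
  set p := Submodule.span ℂ (Set.range e) with hp
  have hmem : ∀ i, e i ∈ p := fun i => Submodule.subset_span ⟨i, rfl⟩
  have hmem0 : u ∈ p := hmem 0
  have hmem1 : u' ∈ p := hmem 1
  have hgenmem : ∀ x : Gen, ∀ i : Fin 2, ρ (PresentedGroup.of x) (e i) ∈ p := by
    intro x i
    cases x <;> fin_cases i
    · show ρ (wz m1 m2) u ∈ p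
      rw [hzu]; exact p.neg_mem hmem0
    · show ρ (wz m1 m2) u' ∈ p
      rw [hzu]; exact p.neg_mem hmem1
    · show ρ (wr1 m1 m2) u ∈ p
      rw [hr1]; exact p.neg_mem hmem0
    · show ρ (wr1 m1 m2) u' ∈ p
      rw [hr1]; exact p.neg_mem hmem1
    · show ρ (wf1 m1 m2) u ∈ p
      rw [hf1u]; exact hmem0
    · show ρ (wf1 m1 m2) u' ∈ p
      rw [hFu']; exact p.neg_mem hmem1
    · show ρ (wr2 m1 m2) u ∈ p
      rw [hbu]; exact p.smul_mem _ hmem0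
    · show ρ (wr2 m1 m2) u' ∈ p
      rw [hbu']; exact p.smul_mem _ hmem1
    · show ρ (wf2 m1 m2) u ∈ p
      rw [← hu'def]; exact hmem1
    · show ρ (wf2 m1 m2) u' ∈ p
      rw [hGu']; exact hmem0
  have hgen : ∀ x : Gen, ∀ w ∈ p, ρ (PresentedGroup.of x) w ∈ p := by
    intro x w hw
    induction hw using Submodule.span_induction with
    | mem w hw => obtain ⟨i, rfl⟩ := hw; exact hgenmem x i
    | zero => rw [map_zero]; exact p.zero_mem
    | add a b _ _ iha ihb => rw [map_add]; exact p.add_mem iha ihb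
    | smul c a _ iha => rw [map_smul]; exact p.smul_mem c iha
  have hall := invariant_all ρ p hgen
  have htop : p = ⊤ := by
    rcases hirr p hall with hbot | htop
    · exfalso; apply hu; simpa [hbot] using hmem0
    · exact htop
  let bas : Module.Basis (Fin 2) ℂ V := Module.Basis.mk li (by rw [← hp, htop])
  have hbas : ∀ i, bas i = e i := fun i => Module.Basis.mk_apply li _ i
  set T := bas.equivFun with hT
  have hTe : ∀ i, T (e i) = Pi.single i 1 := by
    intro i
    rw [← hbas i]
    funext j
    rw [hT, Module.Basis.equivFun_self]
    simp [Pi.single_apply, eq_comm]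
  have hTu : T u = Pi.single 0 1 := hTe 0
  have hTu' : T u' = Pi.single 1 1 := hTe 1
  obtain ⟨ρ', hMf1, hMf2, hMr1, hMr2, hMz⟩ := exists_repU2First m1 m2 hm1odd h2 hl2
  have key : ∀ x : Gen, (T : V →ₗ[ℂ] (Fin 2 → ℂ)) ∘ₗ (ρ (PresentedGroup.of x))
      = (Matrix.mulVecLin ((ρ' (PresentedGroup.of x) : Matrix (Fin 2) (Fin 2) ℂ)))
        ∘ₗ (T : V →ₗ[ℂ] (Fin 2 → ℂ)) := by
    intro x
    refine Module.Basis.ext bas ?_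
    intro i
    rw [LinearMap.comp_apply, LinearMap.comp_apply]
    simp only [LinearEquiv.coe_coe, hbas i, Matrix.mulVecLin_apply]
    cases x <;> fin_cases i
    · show T (ρ (wz m1 m2) u) = Matrix.mulVec ((ρ' (wz m1 m2) : Matrix (Fin 2) (Fin 2) ℂ)) (T u)
      rw [hzu u, map_neg, hTu, hMz]
      funext k; fin_cases k <;>
        simp [Matrix.mulVec, dotProduct, Fin.sum_univ_two, Pi.single_apply]
    · show T (ρ (wz m1 m2) u') = Matrix.mulVec ((ρ' (wz m1 m2) : Matrix (Fin 2) (Fin 2) ℂ)) (T u')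
      rw [hzu u', map_neg, hTu', hMz]
      funext k; fin_cases k <;>
        simp [Matrix.mulVec, dotProduct, Fin.sum_univ_two, Pi.single_apply]
    · show T (ρ (wr1 m1 m2) u) = Matrix.mulVec ((ρ' (wr1 m1 m2) : Matrix (Fin 2) (Fin 2) ℂ)) (T u)
      rw [hr1 u, map_neg, hTu, hMr1]
      funext k; fin_cases k <;>
        simp [Matrix.mulVec, dotProduct, Fin.sum_univ_two, Pi.single_apply]
    · show T (ρ (wr1 m1 m2) u')
        = Matrix.mulVec ((ρ' (wr1 m1 m2) : Matrix (Fin 2) (Fin 2) ℂ)) (T u')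
      rw [hr1 u', map_neg, hTu', hMr1]
      funext k; fin_cases k <;>
        simp [Matrix.mulVec, dotProduct, Fin.sum_univ_two, Pi.single_apply]
    · show T (ρ (wf1 m1 m2) u) = Matrix.mulVec ((ρ' (wf1 m1 m2) : Matrix (Fin 2) (Fin 2) ℂ)) (T u)
      rw [hf1u, hTu, hMf1]
      funext k; fin_cases k <;>
        simp [Matrix.mulVec, dotProduct, Fin.sum_univ_two, Pi.single_apply]
    · show T (ρ (wf1 m1 m2) u')
        = Matrix.mulVec ((ρ' (wf1 m1 m2) : Matrix (Fin 2) (Fin 2) ℂ)) (T u')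
      rw [hFu', map_neg, hTu', hMf1]
      funext k; fin_cases k <;>
        simp [Matrix.mulVec, dotProduct, Fin.sum_univ_two, Pi.single_apply]
    · show T (ρ (wr2 m1 m2) u) = Matrix.mulVec ((ρ' (wr2 m1 m2) : Matrix (Fin 2) (Fin 2) ℂ)) (T u)
      rw [hbu, map_smul, hTu, hMr2]
      funext k; fin_cases k <;>
        simp [Matrix.mulVec, dotProduct, Fin.sum_univ_two, Pi.single_apply,
          Matrix.diagonal]
    · show T (ρ (wr2 m1 m2) u')
        = Matrix.mulVec ((ρ' (wr2 m1 m2) : Matrix (Fin 2) (Fin 2) ℂ)) (T u')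
      rw [hbu', map_smul, hTu', hMr2]
      funext k; fin_cases k <;>
        simp [Matrix.mulVec, dotProduct, Fin.sum_univ_two, Pi.single_apply,
          Matrix.diagonal]
    · show T (ρ (wf2 m1 m2) u) = Matrix.mulVec ((ρ' (wf2 m1 m2) : Matrix (Fin 2) (Fin 2) ℂ)) (T u)
      rw [← hu'def, hTu', hTu, hMf2]
      funext k; fin_cases k <;>
        simp [Matrix.mulVec, dotProduct, Fin.sum_univ_two, Pi.single_apply]
    · show T (ρ (wf2 m1 m2) u')
        = Matrix.mulVec ((ρ' (wf2 m1 m2) : Matrix (Fin 2) (Fin 2) ℂ)) (T u')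
      rw [hGu', hTu, hTu', hMf2]
      funext k; fin_cases k <;>
        simp [Matrix.mulVec, dotProduct, Fin.sum_univ_two, Pi.single_apply]
  have hgenT : ∀ x : Gen, ∀ w : V, T (ρ (PresentedGroup.of x) w)
      = Matrix.mulVec ((ρ' (PresentedGroup.of x) : Matrix (Fin 2) (Fin 2) ℂ)) (T w) := by
    intro x w
    have h := LinearMap.congr_fun (key x) w
    simpa [Matrix.mulVecLin_apply] using h
  exact ⟨ρ', ⟨hMf1, hMf2, hMr1, hMr2, hMz⟩, T, intertwine_all ρ ρ' T hgenT⟩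

end Case2

section Case2S
variable {m1 m2 : ℕ} {V : Type*} [AddCommGroup V] [Module ℂ V]
variable [FiniteDimensional ℂ V] [Nontrivial V]

lemma case2Second (ρ : Representation ℂ (Wt m1 m2) V) (h1 : 1 ≤ m1)
    (hz : ρ (wz m1 m2) = -1)
    (hirr : ∀ p : Submodule ℂ V, (∀ g : Wt m1 m2, ∀ v ∈ p, ρ g v ∈ p) → p = ⊥ ∨ p = ⊤)
    (hm2odd : Odd m2) {ℓ1 : ℤ} (hl1 : Odd ℓ1)
    {u : V} (hu : u ≠ 0)
    (hr2 : ∀ x : V, ρ (wr2 m1 m2) x = -x)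
    (hf2u : ρ (wf2 m1 m2) u = u)
    (hau : ρ (wr1 m1 m2) u = ζ m1 ^ ℓ1 • u) :
    ∃ ρ' : Wt m1 m2 →* GL (Fin 2) ℂ, IsU2Second m1 m2 ℓ1 ρ' ∧ EquivTo2 ρ ρ' := by
  have hν0 : ζ m1 ^ ℓ1 ≠ 0 := zpow_ne_zero _ (zeta_ne_zero m1)
  set u' := ρ (wf1 m1 m2) u with hu'def
  have hu' : u' ≠ 0 := rho_ne_zero ρ _ hu
  have hGu' : ρ (wf1 m1 m2) u' = u := act_f1_f1 ρ u
  have hFu' : ρ (wf2 m1 m2) u' = -u' := by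
    rw [hu'def, act_f2_f1 ρ hz u, hf2u]
  have hainvu : ρ ((wr1 m1 m2)⁻¹) u = (ζ m1 ^ ℓ1)⁻¹ • u := eigen_inv ρ _ hν0 hau
  have hau' : ρ (wr1 m1 m2) u' = ζ m1 ^ (-ℓ1) • u' := by
    rw [hu'def, act_r1_f1 ρ u, hainvu, map_smul, zpow_neg]
  have hzu : ∀ x, ρ (wz m1 m2) x = -x := act_z ρ hz
  set e : Fin 2 → V := ![u, u'] with he
  have hFe : ∀ c : ℂ, ρ (wf2 m1 m2) (c • u') = (-1 : ℂ) • (c • u') := by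
    intro c
    rw [map_smul, hFu', smul_comm]; simp
  have li : LinearIndependent ℂ e := by
    rw [Fintype.linearIndependent_iff]
    intro c hc
    rw [Fin.sum_univ_two] at hc
    have hc' : c 0 • u + c 1 • u' = 0 := hc
    have hx : ρ (wf2 m1 m2) (c 0 • u) = (1 : ℂ) • (c 0 • u) := by
      rw [map_smul, hf2u, one_smul]
    have hpair := eigen_pair_zero (by norm_num : (1 : ℂ) ≠ -1) hx (hFe (c 1)) hc'
    intro i
    fin_cases i
    · rcases smul_eq_zero.mp hpair.1 with h | h
      · exact h
      · exact absurd h hu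
    · rcases smul_eq_zero.mp hpair.2 with h | h
      · exact h
      · exact absurd h hu'
  set p := Submodule.span ℂ (Set.range e) with hp
  have hmem : ∀ i, e i ∈ p := fun i => Submodule.subset_span ⟨i, rfl⟩
  have hmem0 : u ∈ p := hmem 0
  have hmem1 : u' ∈ p := hmem 1
  have hgenmem : ∀ x : Gen, ∀ i : Fin 2, ρ (PresentedGroup.of x) (e i) ∈ p := by
    intro x i
    cases x <;> fin_cases i
    · show ρ (wz m1 m2) u ∈ p
      rw [hzu]; exact p.neg_mem hmem0
    · show ρ (wz m1 m2) u' ∈ p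
      rw [hzu]; exact p.neg_mem hmem1
    · show ρ (wr1 m1 m2) u ∈ p
      rw [hau]; exact p.smul_mem _ hmem0
    · show ρ (wr1 m1 m2) u' ∈ p
      rw [hau']; exact p.smul_mem _ hmem1
    · show ρ (wf1 m1 m2) u ∈ p
      rw [← hu'def]; exact hmem1
    · show ρ (wf1 m1 m2) u' ∈ p
      rw [hGu']; exact hmem0
    · show ρ (wr2 m1 m2) u ∈ p
      rw [hr2]; exact p.neg_mem hmem0
    · show ρ (wr2 m1 m2) u' ∈ p
      rw [hr2]; exact p.neg_mem hmem1
    · show ρ (wf2 m1 m2) u ∈ p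
      rw [hf2u]; exact hmem0
    · show ρ (wf2 m1 m2) u' ∈ p
      rw [hFu']; exact p.neg_mem hmem1
  have hgen : ∀ x : Gen, ∀ w ∈ p, ρ (PresentedGroup.of x) w ∈ p := by
    intro x w hw
    induction hw using Submodule.span_induction with
    | mem w hw => obtain ⟨i, rfl⟩ := hw; exact hgenmem x i
    | zero => rw [map_zero]; exact p.zero_mem
    | add a b _ _ iha ihb => rw [map_add]; exact p.add_mem iha ihb
    | smul c a _ iha => rw [map_smul]; exact p.smul_mem c iha
  have hall := invariant_all ρ p hgen
  have htop : p = ⊤ := by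
    rcases hirr p hall with hbot | htop
    · exfalso; apply hu; simpa [hbot] using hmem0
    · exact htop
  let bas : Module.Basis (Fin 2) ℂ V := Module.Basis.mk li (by rw [← hp, htop])
  have hbas : ∀ i, bas i = e i := fun i => Module.Basis.mk_apply li _ i
  set T := bas.equivFun with hT
  have hTe : ∀ i, T (e i) = Pi.single i 1 := by
    intro i
    rw [← hbas i]
    funext j
    rw [hT, Module.Basis.equivFun_self]
    simp [Pi.single_apply, eq_comm]
  have hTu : T u = Pi.single 0 1 := hTe 0
  have hTu' : T u' = Pi.single 1 1 := hTe 1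
  obtain ⟨ρ', hMf1, hMf2, hMr1, hMr2, hMz⟩ := exists_repU2Second m1 m2 h1 hm2odd hl1
  have key : ∀ x : Gen, (T : V →ₗ[ℂ] (Fin 2 → ℂ)) ∘ₗ (ρ (PresentedGroup.of x))
      = (Matrix.mulVecLin ((ρ' (PresentedGroup.of x) : Matrix (Fin 2) (Fin 2) ℂ)))
        ∘ₗ (T : V →ₗ[ℂ] (Fin 2 → ℂ)) := by
    intro x
    refine Module.Basis.ext bas ?_
    intro i
    rw [LinearMap.comp_apply, LinearMap.comp_apply]
    simp only [LinearEquiv.coe_coe, hbas i, Matrix.mulVecLin_apply]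
    cases x <;> fin_cases i
    · show T (ρ (wz m1 m2) u) = Matrix.mulVec ((ρ' (wz m1 m2) : Matrix (Fin 2) (Fin 2) ℂ)) (T u)
      rw [hzu u, map_neg, hTu, hMz]
      funext k; fin_cases k <;>
        simp [Matrix.mulVec, dotProduct, Fin.sum_univ_two, Pi.single_apply]
    · show T (ρ (wz m1 m2) u') = Matrix.mulVec ((ρ' (wz m1 m2) : Matrix (Fin 2) (Fin 2) ℂ)) (T u')
      rw [hzu u', map_neg, hTu', hMz]
      funext k; fin_cases k <;>
        simp [Matrix.mulVec, dotProduct, Fin.sum_univ_two, Pi.single_apply]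
    · show T (ρ (wr1 m1 m2) u) = Matrix.mulVec ((ρ' (wr1 m1 m2) : Matrix (Fin 2) (Fin 2) ℂ)) (T u)
      rw [hau, map_smul, hTu, hMr1]
      funext k; fin_cases k <;>
        simp [Matrix.mulVec, dotProduct, Fin.sum_univ_two, Pi.single_apply,
          Matrix.diagonal]
    · show T (ρ (wr1 m1 m2) u')
        = Matrix.mulVec ((ρ' (wr1 m1 m2) : Matrix (Fin 2) (Fin 2) ℂ)) (T u')
      rw [hau', map_smul, hTu', hMr1]
      funext k; fin_cases k <;>
        simp [Matrix.mulVec, dotProduct, Fin.sum_univ_two, Pi.single_apply,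
          Matrix.diagonal]
    · show T (ρ (wf1 m1 m2) u) = Matrix.mulVec ((ρ' (wf1 m1 m2) : Matrix (Fin 2) (Fin 2) ℂ)) (T u)
      rw [← hu'def, hTu', hTu, hMf1]
      funext k; fin_cases k <;>
        simp [Matrix.mulVec, dotProduct, Fin.sum_univ_two, Pi.single_apply]
    · show T (ρ (wf1 m1 m2) u')
        = Matrix.mulVec ((ρ' (wf1 m1 m2) : Matrix (Fin 2) (Fin 2) ℂ)) (T u')
      rw [hGu', hTu, hTu', hMf1]
      funext k; fin_cases k <;>
        simp [Matrix.mulVec, dotProduct, Fin.sum_univ_two, Pi.single_apply]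
    · show T (ρ (wr2 m1 m2) u) = Matrix.mulVec ((ρ' (wr2 m1 m2) : Matrix (Fin 2) (Fin 2) ℂ)) (T u)
      rw [hr2 u, map_neg, hTu, hMr2]
      funext k; fin_cases k <;>
        simp [Matrix.mulVec, dotProduct, Fin.sum_univ_two, Pi.single_apply]
    · show T (ρ (wr2 m1 m2) u')
        = Matrix.mulVec ((ρ' (wr2 m1 m2) : Matrix (Fin 2) (Fin 2) ℂ)) (T u')
      rw [hr2 u', map_neg, hTu', hMr2]
      funext k; fin_cases k <;>
        simp [Matrix.mulVec, dotProduct, Fin.sum_univ_two, Pi.single_apply]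
    · show T (ρ (wf2 m1 m2) u) = Matrix.mulVec ((ρ' (wf2 m1 m2) : Matrix (Fin 2) (Fin 2) ℂ)) (T u)
      rw [hf2u, hTu, hMf2]
      funext k; fin_cases k <;>
        simp [Matrix.mulVec, dotProduct, Fin.sum_univ_two, Pi.single_apply]
    · show T (ρ (wf2 m1 m2) u')
        = Matrix.mulVec ((ρ' (wf2 m1 m2) : Matrix (Fin 2) (Fin 2) ℂ)) (T u')
      rw [hFu', map_neg, hTu', hMf2]
      funext k; fin_cases k <;>
        simp [Matrix.mulVec, dotProduct, Fin.sum_univ_two, Pi.single_apply]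
  have hgenT : ∀ x : Gen, ∀ w : V, T (ρ (PresentedGroup.of x) w)
      = Matrix.mulVec ((ρ' (PresentedGroup.of x) : Matrix (Fin 2) (Fin 2) ℂ)) (T w) := by
    intro x w
    have h := LinearMap.congr_fun (key x) w
    simpa [Matrix.mulVecLin_apply] using h
  exact ⟨ρ', ⟨hMf1, hMf2, hMr1, hMr2, hMz⟩, T, intertwine_all ρ ρ' T hgenT⟩

end Case2S

section Case4
variable {m1 m2 : ℕ} {V : Type*} [AddCommGroup V] [Module ℂ V]
variable [FiniteDimensional ℂ V] [Nontrivial V]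

set_option maxHeartbeats 1000000 in
lemma case4 (ρ : Representation ℂ (Wt m1 m2) V) (h1 : 1 ≤ m1) (h2 : 1 ≤ m2)
    (hz : ρ (wz m1 m2) = -1)
    (hirr : ∀ p : Submodule ℂ V, (∀ g : Wt m1 m2, ∀ v ∈ p, ρ g v ∈ p) → p = ⊥ ∨ p = ⊤)
    {ℓ1 ℓ2 : ℤ} (hl1 : Odd ℓ1) (hl2 : Odd ℓ2)
    (hb1 : 0 < ℓ1) (hb1' : ℓ1 < m1) (hb2 : 0 < ℓ2) (hb2' : ℓ2 < m2)
    {v : V} (hv : v ≠ 0)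
    (hav : ρ (wr1 m1 m2) v = ζ m1 ^ ℓ1 • v)
    (hbv : ρ (wr2 m1 m2) v = ζ m2 ^ ℓ2 • v) :
    ∃ ρ' : Wt m1 m2 →* GL (Fin 4) ℂ, IsU4 m1 m2 ℓ1 ℓ2 ρ' ∧ EquivTo4 ρ ρ' := by
  have hζ1 := zeta_ne_zero m1
  have hζ2 := zeta_ne_zero m2
  have hμ0 : ζ m1 ^ ℓ1 ≠ 0 := zpow_ne_zero _ hζ1
  have hν0 : ζ m2 ^ ℓ2 ≠ 0 := zpow_ne_zero _ hζ2
  have hμinv : (ζ m1 ^ ℓ1)⁻¹ = ζ m1 ^ (-ℓ1) := by rw [zpow_neg]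
  have hνinv : (ζ m2 ^ ℓ2)⁻¹ = ζ m2 ^ (-ℓ2) := by rw [zpow_neg]
  have hμne : ζ m1 ^ ℓ1 ≠ ζ m1 ^ (-ℓ1) := by
    intro h
    have hsq : ζ m1 ^ ℓ1 * ζ m1 ^ ℓ1 = 1 := by
      nth_rewrite 2 [h]
      exact zeta_mul_zeta_neg ℓ1
    rw [← zpow_add₀ hζ1] at hsq
    exact zeta_zpow_ne_one h1 (by omega) (by omega) hsq
  have hνne : ζ m2 ^ ℓ2 ≠ ζ m2 ^ (-ℓ2) := by
    intro h
    have hsq : ζ m2 ^ ℓ2 * ζ m2 ^ ℓ2 = 1 := by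
      nth_rewrite 2 [h]
      exact zeta_mul_zeta_neg ℓ2
    rw [← zpow_add₀ hζ2] at hsq
    exact zeta_zpow_ne_one h2 (by omega) (by omega) hsq
  have hzu : ∀ x, ρ (wz m1 m2) x = -x := act_z ρ hz
  set e1 := ρ (wf1 m1 m2) v with he1def
  set e2 := ρ (wf2 m1 m2) v with he2def
  set e3 := ρ (wf1 m1 m2) e2 with he3def
  have he1ne : e1 ≠ 0 := rho_ne_zero ρ _ hv
  have he2ne : e2 ≠ 0 := rho_ne_zero ρ _ hv
  have he3ne : e3 ≠ 0 := rho_ne_zero ρ _ he2ne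
  -- f1 actions
  have hf1v : ρ (wf1 m1 m2) v = e1 := rfl
  have hf1e1 : ρ (wf1 m1 m2) e1 = v := act_f1_f1 ρ v
  have hf1e2 : ρ (wf1 m1 m2) e2 = e3 := rfl
  have hf1e3 : ρ (wf1 m1 m2) e3 = e2 := act_f1_f1 ρ e2
  -- f2 actions
  have hf2v : ρ (wf2 m1 m2) v = e2 := rfl
  have hf2e1 : ρ (wf2 m1 m2) e1 = -e3 := by
    rw [he1def, act_f2_f1 ρ hz v, ← he2def, ← he3def]
  have hf2e2 : ρ (wf2 m1 m2) e2 = v := act_f2_f2 ρ v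
  have hf2e3 : ρ (wf2 m1 m2) e3 = -e1 := by
    rw [he3def, act_f2_f1 ρ hz e2, hf2e2, ← he1def]
  -- r1 actions
  have hainv : ρ ((wr1 m1 m2)⁻¹) v = ζ m1 ^ (-ℓ1) • v := by
    rw [← hμinv]; exact eigen_inv ρ _ hμ0 hav
  have hae1 : ρ (wr1 m1 m2) e1 = ζ m1 ^ (-ℓ1) • e1 := by
    rw [he1def, act_r1_f1 ρ v, hainv, map_smul]
  have hae2 : ρ (wr1 m1 m2) e2 = ζ m1 ^ ℓ1 • e2 := by
    rw [he2def, act_r1_f2 ρ v, hav, map_smul]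
  have hainv2 : ρ ((wr1 m1 m2)⁻¹) e2 = ζ m1 ^ (-ℓ1) • e2 := by
    rw [← hμinv]; exact eigen_inv ρ _ hμ0 hae2
  have hae3 : ρ (wr1 m1 m2) e3 = ζ m1 ^ (-ℓ1) • e3 := by
    rw [he3def, act_r1_f1 ρ e2, hainv2, map_smul]
  -- r2 actions
  have hbe1 : ρ (wr2 m1 m2) e1 = ζ m2 ^ ℓ2 • e1 := by
    rw [he1def, act_r2_f1 ρ v, hbv, map_smul]
  have hbinv : ρ ((wr2 m1 m2)⁻¹) v = ζ m2 ^ (-ℓ2) • v := by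
    rw [← hνinv]; exact eigen_inv ρ _ hν0 hbv
  have hbe2 : ρ (wr2 m1 m2) e2 = ζ m2 ^ (-ℓ2) • e2 := by
    rw [he2def, act_r2_f2 ρ v, hbinv, map_smul]
  have hbe3 : ρ (wr2 m1 m2) e3 = ζ m2 ^ (-ℓ2) • e3 := by
    rw [he3def, act_r2_f1 ρ e2, hbe2, map_smul]
  set e : Fin 4 → V := ![v, e1, e2, e3] with he
  -- linear independence
  have li : LinearIndependent ℂ e := by
    rw [Fintype.linearIndependent_iff]
    intro c hc
    rw [Fin.sum_univ_four] at hc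
    have hc' : (c 0 • v + c 1 • e1) + (c 2 • e2 + c 3 • e3) = 0 := by
      have : c 0 • e 0 + c 1 • e 1 + c 2 • e 2 + c 3 • e 3 = 0 := hc
      rw [show e 0 = v from rfl, show e 1 = e1 from rfl, show e 2 = e2 from rfl,
        show e 3 = e3 from rfl] at this
      rw [← this]; abel
    have hx : ρ (wr2 m1 m2) (c 0 • v + c 1 • e1)
        = ζ m2 ^ ℓ2 • (c 0 • v + c 1 • e1) := by
      rw [map_add, map_smul, map_smul, hbv, hbe1, smul_add, smul_comm (ζ m2 ^ ℓ2) (c 0),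
        smul_comm (ζ m2 ^ ℓ2) (c 1)]
    have hy : ρ (wr2 m1 m2) (c 2 • e2 + c 3 • e3)
        = ζ m2 ^ (-ℓ2) • (c 2 • e2 + c 3 • e3) := by
      rw [map_add, map_smul, map_smul, hbe2, hbe3, smul_add, smul_comm (ζ m2 ^ (-ℓ2)) (c 2),
        smul_comm (ζ m2 ^ (-ℓ2)) (c 3)]
    have hpair := eigen_pair_zero hνne hx hy hc'
    have hx1 : ρ (wr1 m1 m2) (c 0 • v) = ζ m1 ^ ℓ1 • (c 0 • v) := by
      rw [map_smul, hav, smul_comm]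
    have hy1 : ρ (wr1 m1 m2) (c 1 • e1) = ζ m1 ^ (-ℓ1) • (c 1 • e1) := by
      rw [map_smul, hae1, smul_comm]
    have hpair1 := eigen_pair_zero hμne hx1 hy1 hpair.1
    have hx2 : ρ (wr1 m1 m2) (c 2 • e2) = ζ m1 ^ ℓ1 • (c 2 • e2) := by
      rw [map_smul, hae2, smul_comm]
    have hy2 : ρ (wr1 m1 m2) (c 3 • e3) = ζ m1 ^ (-ℓ1) • (c 3 • e3) := by
      rw [map_smul, hae3, smul_comm]
    have hpair2 := eigen_pair_zero hμne hx2 hy2 hpair.2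
    intro i
    fin_cases i
    · rcases smul_eq_zero.mp hpair1.1 with h | h
      · exact h
      · exact absurd h hv
    · rcases smul_eq_zero.mp hpair1.2 with h | h
      · exact h
      · exact absurd h he1ne
    · rcases smul_eq_zero.mp hpair2.1 with h | h
      · exact h
      · exact absurd h he2ne
    · rcases smul_eq_zero.mp hpair2.2 with h | h
      · exact h
      · exact absurd h he3ne
  set p := Submodule.span ℂ (Set.range e) with hp
  have hmem : ∀ i, e i ∈ p := fun i => Submodule.subset_span ⟨i, rfl⟩
  have hmem0 : v ∈ p := hmem 0
  have hmem1 : e1 ∈ p := hmem 1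
  have hmem2 : e2 ∈ p := hmem 2
  have hmem3 : e3 ∈ p := hmem 3
  have hgenmem : ∀ x : Gen, ∀ i : Fin 4, ρ (PresentedGroup.of x) (e i) ∈ p := by
    intro x i
    cases x <;> fin_cases i
    · show ρ (wz m1 m2) v ∈ p
      rw [hzu]; exact p.neg_mem hmem0
    · show ρ (wz m1 m2) e1 ∈ p
      rw [hzu]; exact p.neg_mem hmem1
    · show ρ (wz m1 m2) e2 ∈ p
      rw [hzu]; exact p.neg_mem hmem2
    · show ρ (wz m1 m2) e3 ∈ p
      rw [hzu]; exact p.neg_mem hmem3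
    · show ρ (wr1 m1 m2) v ∈ p
      rw [hav]; exact p.smul_mem _ hmem0
    · show ρ (wr1 m1 m2) e1 ∈ p
      rw [hae1]; exact p.smul_mem _ hmem1
    · show ρ (wr1 m1 m2) e2 ∈ p
      rw [hae2]; exact p.smul_mem _ hmem2
    · show ρ (wr1 m1 m2) e3 ∈ p
      rw [hae3]; exact p.smul_mem _ hmem3
    · show ρ (wf1 m1 m2) v ∈ p
      rw [hf1v]; exact hmem1
    · show ρ (wf1 m1 m2) e1 ∈ p
      rw [hf1e1]; exact hmem0
    · show ρ (wf1 m1 m2) e2 ∈ p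
      rw [hf1e2]; exact hmem3
    · show ρ (wf1 m1 m2) e3 ∈ p
      rw [hf1e3]; exact hmem2
    · show ρ (wr2 m1 m2) v ∈ p
      rw [hbv]; exact p.smul_mem _ hmem0
    · show ρ (wr2 m1 m2) e1 ∈ p
      rw [hbe1]; exact p.smul_mem _ hmem1
    · show ρ (wr2 m1 m2) e2 ∈ p
      rw [hbe2]; exact p.smul_mem _ hmem2
    · show ρ (wr2 m1 m2) e3 ∈ p
      rw [hbe3]; exact p.smul_mem _ hmem3
    · show ρ (wf2 m1 m2) v ∈ p
      rw [hf2v]; exact hmem2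
    · show ρ (wf2 m1 m2) e1 ∈ p
      rw [hf2e1]; exact p.neg_mem hmem3
    · show ρ (wf2 m1 m2) e2 ∈ p
      rw [hf2e2]; exact hmem0
    · show ρ (wf2 m1 m2) e3 ∈ p
      rw [hf2e3]; exact p.neg_mem hmem1
  have hgen : ∀ x : Gen, ∀ w ∈ p, ρ (PresentedGroup.of x) w ∈ p := by
    intro x w hw
    induction hw using Submodule.span_induction with
    | mem w hw => obtain ⟨i, rfl⟩ := hw; exact hgenmem x i
    | zero => rw [map_zero]; exact p.zero_mem
    | add a b _ _ iha ihb => rw [map_add]; exact p.add_mem iha ihb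
    | smul c a _ iha => rw [map_smul]; exact p.smul_mem c iha
  have hall := invariant_all ρ p hgen
  have htop : p = ⊤ := by
    rcases hirr p hall with hbot | htop
    · exfalso; apply hv; simpa [hbot] using hmem0
    · exact htop
  let bas : Module.Basis (Fin 4) ℂ V := Module.Basis.mk li (by rw [← hp, htop])
  have hbas : ∀ i, bas i = e i := fun i => Module.Basis.mk_apply li _ i
  set T := bas.equivFun with hT
  have hTe : ∀ i, T (e i) = Pi.single i 1 := by
    intro i
    rw [← hbas i]
    funext j
    rw [hT, Module.Basis.equivFun_self]
    simp [Pi.single_apply, eq_comm]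
  have hTv : T v = Pi.single 0 1 := hTe 0
  have hTe1 : T e1 = Pi.single 1 1 := hTe 1
  have hTe2 : T e2 = Pi.single 2 1 := hTe 2
  have hTe3 : T e3 = Pi.single 3 1 := hTe 3
  obtain ⟨ρ', hMf1, hMf2, hMr1, hMr2, hMz⟩ := exists_repU4 m1 m2 h1 h2 hl1 hl2
  have key : ∀ x : Gen, (T : V →ₗ[ℂ] (Fin 4 → ℂ)) ∘ₗ (ρ (PresentedGroup.of x))
      = (Matrix.mulVecLin ((ρ' (PresentedGroup.of x) : Matrix (Fin 4) (Fin 4) ℂ)))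
        ∘ₗ (T : V →ₗ[ℂ] (Fin 4 → ℂ)) := by
    intro x
    refine Module.Basis.ext bas ?_
    intro i
    rw [LinearMap.comp_apply, LinearMap.comp_apply]
    simp only [LinearEquiv.coe_coe, hbas i, Matrix.mulVecLin_apply]
    cases x <;> fin_cases i
    · show T (ρ (wz m1 m2) v) = Matrix.mulVec ((ρ' (wz m1 m2) : Matrix (Fin 4) (Fin 4) ℂ)) (T v)
      rw [hzu v, map_neg, hTv, hMz]
      funext k; fin_cases k <;>
        simp [Matrix.mulVec, dotProduct, Fin.sum_univ_four, Pi.single_apply]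
    · show T (ρ (wz m1 m2) e1)
        = Matrix.mulVec ((ρ' (wz m1 m2) : Matrix (Fin 4) (Fin 4) ℂ)) (T e1)
      rw [hzu e1, map_neg, hTe1, hMz]
      funext k; fin_cases k <;>
        simp [Matrix.mulVec, dotProduct, Fin.sum_univ_four, Pi.single_apply]
    · show T (ρ (wz m1 m2) e2)
        = Matrix.mulVec ((ρ' (wz m1 m2) : Matrix (Fin 4) (Fin 4) ℂ)) (T e2)
      rw [hzu e2, map_neg, hTe2, hMz]
      funext k; fin_cases k <;>
        simp [Matrix.mulVec, dotProduct, Fin.sum_univ_four, Pi.single_apply]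
    · show T (ρ (wz m1 m2) e3)
        = Matrix.mulVec ((ρ' (wz m1 m2) : Matrix (Fin 4) (Fin 4) ℂ)) (T e3)
      rw [hzu e3, map_neg, hTe3, hMz]
      funext k; fin_cases k <;>
        simp [Matrix.mulVec, dotProduct, Fin.sum_univ_four, Pi.single_apply]
    · show T (ρ (wr1 m1 m2) v) = Matrix.mulVec ((ρ' (wr1 m1 m2) : Matrix (Fin 4) (Fin 4) ℂ)) (T v)
      rw [hav, map_smul, hTv, hMr1]
      funext k; fin_cases k <;>
        simp [R1, Matrix.mulVec, dotProduct, Fin.sum_univ_four, Pi.single_apply,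
          Matrix.diagonal]
    · show T (ρ (wr1 m1 m2) e1)
        = Matrix.mulVec ((ρ' (wr1 m1 m2) : Matrix (Fin 4) (Fin 4) ℂ)) (T e1)
      rw [hae1, map_smul, hTe1, hMr1]
      funext k; fin_cases k <;>
        simp [R1, Matrix.mulVec, dotProduct, Fin.sum_univ_four, Pi.single_apply,
          Matrix.diagonal]
    · show T (ρ (wr1 m1 m2) e2)
        = Matrix.mulVec ((ρ' (wr1 m1 m2) : Matrix (Fin 4) (Fin 4) ℂ)) (T e2)
      rw [hae2, map_smul, hTe2, hMr1]
      funext k; fin_cases k <;>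
        simp [R1, Matrix.mulVec, dotProduct, Fin.sum_univ_four, Pi.single_apply,
          Matrix.diagonal]
    · show T (ρ (wr1 m1 m2) e3)
        = Matrix.mulVec ((ρ' (wr1 m1 m2) : Matrix (Fin 4) (Fin 4) ℂ)) (T e3)
      rw [hae3, map_smul, hTe3, hMr1]
      funext k; fin_cases k <;>
        simp [R1, Matrix.mulVec, dotProduct, Fin.sum_univ_four, Pi.single_apply,
          Matrix.diagonal]
    · show T (ρ (wf1 m1 m2) v) = Matrix.mulVec ((ρ' (wf1 m1 m2) : Matrix (Fin 4) (Fin 4) ℂ)) (T v)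
      rw [hf1v, hTe1, hTv, hMf1]
      funext k; fin_cases k <;>
        simp [F1, Matrix.mulVec, dotProduct, Fin.sum_univ_four, Pi.single_apply,
          Matrix.vecHead, Matrix.vecTail]
    · show T (ρ (wf1 m1 m2) e1)
        = Matrix.mulVec ((ρ' (wf1 m1 m2) : Matrix (Fin 4) (Fin 4) ℂ)) (T e1)
      rw [hf1e1, hTv, hTe1, hMf1]
      funext k; fin_cases k <;>
        simp [F1, Matrix.mulVec, dotProduct, Fin.sum_univ_four, Pi.single_apply,
          Matrix.vecHead, Matrix.vecTail]
    · show T (ρ (wf1 m1 m2) e2)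
        = Matrix.mulVec ((ρ' (wf1 m1 m2) : Matrix (Fin 4) (Fin 4) ℂ)) (T e2)
      rw [hf1e2, hTe3, hTe2, hMf1]
      funext k; fin_cases k <;>
        simp [F1, Matrix.mulVec, dotProduct, Fin.sum_univ_four, Pi.single_apply,
          Matrix.vecHead, Matrix.vecTail]
    · show T (ρ (wf1 m1 m2) e3)
        = Matrix.mulVec ((ρ' (wf1 m1 m2) : Matrix (Fin 4) (Fin 4) ℂ)) (T e3)
      rw [hf1e3, hTe2, hTe3, hMf1]
      funext k; fin_cases k <;>
        simp [F1, Matrix.mulVec, dotProduct, Fin.sum_univ_four, Pi.single_apply,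
          Matrix.vecHead, Matrix.vecTail]
    · show T (ρ (wr2 m1 m2) v) = Matrix.mulVec ((ρ' (wr2 m1 m2) : Matrix (Fin 4) (Fin 4) ℂ)) (T v)
      rw [hbv, map_smul, hTv, hMr2]
      funext k; fin_cases k <;>
        simp [R2, Matrix.mulVec, dotProduct, Fin.sum_univ_four, Pi.single_apply,
          Matrix.diagonal]
    · show T (ρ (wr2 m1 m2) e1)
        = Matrix.mulVec ((ρ' (wr2 m1 m2) : Matrix (Fin 4) (Fin 4) ℂ)) (T e1)
      rw [hbe1, map_smul, hTe1, hMr2]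
      funext k; fin_cases k <;>
        simp [R2, Matrix.mulVec, dotProduct, Fin.sum_univ_four, Pi.single_apply,
          Matrix.diagonal]
    · show T (ρ (wr2 m1 m2) e2)
        = Matrix.mulVec ((ρ' (wr2 m1 m2) : Matrix (Fin 4) (Fin 4) ℂ)) (T e2)
      rw [hbe2, map_smul, hTe2, hMr2]
      funext k; fin_cases k <;>
        simp [R2, Matrix.mulVec, dotProduct, Fin.sum_univ_four, Pi.single_apply,
          Matrix.diagonal]
    · show T (ρ (wr2 m1 m2) e3)
        = Matrix.mulVec ((ρ' (wr2 m1 m2) : Matrix (Fin 4) (Fin 4) ℂ)) (T e3)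
      rw [hbe3, map_smul, hTe3, hMr2]
      funext k; fin_cases k <;>
        simp [R2, Matrix.mulVec, dotProduct, Fin.sum_univ_four, Pi.single_apply,
          Matrix.diagonal]
    · show T (ρ (wf2 m1 m2) v) = Matrix.mulVec ((ρ' (wf2 m1 m2) : Matrix (Fin 4) (Fin 4) ℂ)) (T v)
      rw [hf2v, hTe2, hTv, hMf2]
      funext k; fin_cases k <;>
        simp [F2, Matrix.mulVec, dotProduct, Fin.sum_univ_four, Pi.single_apply,
          Matrix.vecHead, Matrix.vecTail]
    · show T (ρ (wf2 m1 m2) e1)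
        = Matrix.mulVec ((ρ' (wf2 m1 m2) : Matrix (Fin 4) (Fin 4) ℂ)) (T e1)
      rw [hf2e1, map_neg, hTe3, hTe1, hMf2]
      funext k; fin_cases k <;>
        simp [F2, Matrix.mulVec, dotProduct, Fin.sum_univ_four, Pi.single_apply,
          Matrix.vecHead, Matrix.vecTail]
    · show T (ρ (wf2 m1 m2) e2)
        = Matrix.mulVec ((ρ' (wf2 m1 m2) : Matrix (Fin 4) (Fin 4) ℂ)) (T e2)
      rw [hf2e2, hTv, hTe2, hMf2]
      funext k; fin_cases k <;>
        simp [F2, Matrix.mulVec, dotProduct, Fin.sum_univ_four, Pi.single_apply,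
          Matrix.vecHead, Matrix.vecTail]
    · show T (ρ (wf2 m1 m2) e3)
        = Matrix.mulVec ((ρ' (wf2 m1 m2) : Matrix (Fin 4) (Fin 4) ℂ)) (T e3)
      rw [hf2e3, map_neg, hTe1, hTe3, hMf2]
      funext k; fin_cases k <;>
        simp [F2, Matrix.mulVec, dotProduct, Fin.sum_univ_four, Pi.single_apply,
          Matrix.vecHead, Matrix.vecTail]
  have hgenT : ∀ x : Gen, ∀ w : V, T (ρ (PresentedGroup.of x) w)
      = Matrix.mulVec ((ρ' (PresentedGroup.of x) : Matrix (Fin 4) (Fin 4) ℂ)) (T w) := by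
    intro x w
    have h := LinearMap.congr_fun (key x) w
    simpa [Matrix.mulVecLin_apply] using h
  exact ⟨ρ', ⟨hMf1, hMf2, hMr1, hMr2, hMz⟩, T, intertwine_all ρ ρ' T hgenT⟩

end Case4

section Global
variable {m1 m2 : ℕ} {V : Type*} [AddCommGroup V] [Module ℂ V]
variable [FiniteDimensional ℂ V] [Nontrivial V]

lemma global_neg_r1 (ρ : Representation ℂ (Wt m1 m2) V)
    (hz : ρ (wz m1 m2) = -1)
    (hirr : ∀ p : Submodule ℂ V, (∀ g : Wt m1 m2, ∀ v ∈ p, ρ g v ∈ p) → p = ⊥ ∨ p = ⊤)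
    {v : V} (hv : v ≠ 0) (hav : ρ (wr1 m1 m2) v = -v) : ∀ x, ρ (wr1 m1 m2) x = -x := by
  set S := Module.End.eigenspace (ρ (wr1 m1 m2)) (-1) with hS
  have hmemS : ∀ x : V, x ∈ S ↔ ρ (wr1 m1 m2) x = -x := by
    intro x; rw [hS, Module.End.mem_eigenspace_iff, neg_one_smul]
  have hvS : v ∈ S := (hmemS v).mpr hav
  have hgen : ∀ x : Gen, ∀ w ∈ S, ρ (PresentedGroup.of x) w ∈ S := by
    intro x w hw
    rw [hmemS] at hw
    have hwinv : ρ ((wr1 m1 m2)⁻¹) w = -w := by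
      have h := eigen_inv ρ (wr1 m1 m2) (by norm_num : (-1 : ℂ) ≠ 0)
        (by rw [hw, neg_one_smul] : ρ (wr1 m1 m2) w = (-1 : ℂ) • w)
      rw [h]; norm_num
    cases x
    · show ρ (wz m1 m2) w ∈ S
      rw [hmemS, act_z ρ hz w, map_neg, hw]
    · show ρ (wr1 m1 m2) w ∈ S
      rw [hmemS, hw, map_neg, hw]
    · show ρ (wf1 m1 m2) w ∈ S
      rw [hmemS, act_r1_f1 ρ w, hwinv, map_neg]
    · show ρ (wr2 m1 m2) w ∈ S
      rw [hmemS, act_r1_r2 ρ w, hw, map_neg]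
    · show ρ (wf2 m1 m2) w ∈ S
      rw [hmemS, act_r1_f2 ρ w, hw, map_neg]
  have hall := invariant_all ρ S hgen
  rcases hirr S hall with hbot | htopS
  · exfalso; apply hv; simpa [hbot] using hvS
  · intro x
    have hx : x ∈ S := by rw [htopS]; trivial
    exact (hmemS x).mp hx

lemma global_neg_r2 (ρ : Representation ℂ (Wt m1 m2) V)
    (hz : ρ (wz m1 m2) = -1)
    (hirr : ∀ p : Submodule ℂ V, (∀ g : Wt m1 m2, ∀ v ∈ p, ρ g v ∈ p) → p = ⊥ ∨ p = ⊤)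
    {v : V} (hv : v ≠ 0) (hav : ρ (wr2 m1 m2) v = -v) : ∀ x, ρ (wr2 m1 m2) x = -x := by
  set S := Module.End.eigenspace (ρ (wr2 m1 m2)) (-1) with hS
  have hmemS : ∀ x : V, x ∈ S ↔ ρ (wr2 m1 m2) x = -x := by
    intro x; rw [hS, Module.End.mem_eigenspace_iff, neg_one_smul]
  have hvS : v ∈ S := (hmemS v).mpr hav
  have hgen : ∀ x : Gen, ∀ w ∈ S, ρ (PresentedGroup.of x) w ∈ S := by
    intro x w hw
    rw [hmemS] at hw
    have hwinv : ρ ((wr2 m1 m2)⁻¹) w = -w := by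
      have h := eigen_inv ρ (wr2 m1 m2) (by norm_num : (-1 : ℂ) ≠ 0)
        (by rw [hw, neg_one_smul] : ρ (wr2 m1 m2) w = (-1 : ℂ) • w)
      rw [h]; norm_num
    cases x
    · show ρ (wz m1 m2) w ∈ S
      rw [hmemS, act_z ρ hz w, map_neg, hw]
    · show ρ (wr1 m1 m2) w ∈ S
      rw [hmemS, ← act_r1_r2 ρ w, hw, map_neg]
    · show ρ (wf1 m1 m2) w ∈ S
      rw [hmemS, act_r2_f1 ρ w, hw, map_neg]
    · show ρ (wr2 m1 m2) w ∈ S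
      rw [hmemS, hw, map_neg, hw]
    · show ρ (wf2 m1 m2) w ∈ S
      rw [hmemS, act_r2_f2 ρ w, hwinv, map_neg]
  have hall := invariant_all ρ S hgen
  rcases hirr S hall with hbot | htopS
  · exfalso; apply hv; simpa [hbot] using hvS
  · intro x
    have hx : x ∈ S := by rw [htopS]; trivial
    exact (hmemS x).mp hx

end Global
/-- Classification: every finite-dimensional irreducible complex representation of
`W̃(m1,m2)` on which `z` acts as `−Id` is isomorphic to a `U(ℓ1,ℓ2)` with `ℓ1, ℓ2` odd,
`0 < ℓ1 < m1`, `0 < ℓ2 < m2`; or, if `m1` is odd, to a `U(m1,ℓ2)` with `ℓ2` odd,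
`0 < ℓ2 < 2 m2`; or, if `m2` is odd, to a `U(ℓ1,m2)` with `ℓ1` odd, `0 < ℓ1 < 2 m1`. -/
theorem classification_of_spin_representations (m1 m2 : ℕ) (h1 : 1 ≤ m1) (h2 : 1 ≤ m2)
    (V : Type*) [AddCommGroup V] [Module ℂ V] [FiniteDimensional ℂ V] [Nontrivial V]
    (ρ : Representation ℂ (Wt m1 m2) V)
    (hz : ρ (wz m1 m2) = -1)
    (hirr : ∀ p : Submodule ℂ V,
      (∀ g : Wt m1 m2, ∀ v ∈ p, ρ g v ∈ p) → p = ⊥ ∨ p = ⊤) :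
    (∃ ℓ1 ℓ2 : ℤ, Odd ℓ1 ∧ Odd ℓ2 ∧ 0 < ℓ1 ∧ ℓ1 < m1 ∧ 0 < ℓ2 ∧ ℓ2 < m2 ∧
      ∃ ρ' : Wt m1 m2 →* GL (Fin 4) ℂ, IsU4 m1 m2 ℓ1 ℓ2 ρ' ∧ EquivTo4 ρ ρ') ∨
    (Odd m1 ∧ ∃ ℓ2 : ℤ, Odd ℓ2 ∧ 0 < ℓ2 ∧ ℓ2 < 2 * m2 ∧
      ∃ ρ' : Wt m1 m2 →* GL (Fin 2) ℂ, IsU2First m1 m2 ℓ2 ρ' ∧ EquivTo2 ρ ρ') ∨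
    (Odd m2 ∧ ∃ ℓ1 : ℤ, Odd ℓ1 ∧ 0 < ℓ1 ∧ ℓ1 < 2 * m1 ∧
      ∃ ρ' : Wt m1 m2 →* GL (Fin 2) ℂ, IsU2Second m1 m2 ℓ1 ρ' ∧ EquivTo2 ρ ρ') := by
  obtain ⟨μ, ν, v, hv, hav, hbv⟩ :=
    exists_common_eigenvector (ρ (wr1 m1 m2)) (ρ (wr2 m1 m2)) (act_r1_r2 ρ)
  have hζ1 := zeta_ne_zero m1
  have hζ2 := zeta_ne_zero m2
  have hμm : μ ^ m1 = -1 := eigen_of_pow_neg_one ρ hz hv hav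
  have hνm : ν ^ m2 = -1 := eigen_of_pow_neg_one' ρ hz hv hbv
  by_cases hdeg1 : μ * μ = 1
  · -- r1 acts as -1 : two-dimensional rep of the first kind
    have hμ : μ = -1 := by
      rcases mul_self_eq_one_iff.mp hdeg1 with h | h
      · exfalso; rw [h, one_pow] at hμm; norm_num at hμm
      · exact h
    have hr1 : ∀ x, ρ (wr1 m1 m2) x = -x :=
      global_neg_r1 ρ hz hirr hv (by rw [hav, hμ, neg_one_smul])
    have hm1odd : Odd m1 := by
      by_contra hev
      rw [Nat.not_odd_iff_even] at hev
      rw [hμ, hev.neg_one_pow] at hμm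
      norm_num at hμm
    obtain ⟨ε, κ, w, hw, hFw, hbw⟩ :=
      exists_common_eigenvector (ρ (wf1 m1 m2)) (ρ (wr2 m1 m2))
        (fun x => (act_r2_f1 ρ x).symm)
    have hκm : κ ^ m2 = -1 := eigen_of_pow_neg_one' ρ hz hw hbw
    have hκ0 : κ ≠ 0 := by
      intro h; rw [h, zero_pow (by omega : m2 ≠ 0)] at hκm; norm_num at hκm
    obtain ⟨ℓ2, hl2odd, hl2pos, hl2lt, hκζ⟩ := exists_ell h2 hκm
    have hbw' : ρ (wr2 m1 m2) w = ζ m2 ^ ℓ2 • w := by rw [hbw, hκζ]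
    have hFFw := act_f1_f1 ρ w
    rw [hFw, map_smul, hFw, smul_smul] at hFFw
    have hε2 : ε * ε = 1 := scalar_eq_of_smul hw (by rw [hFFw, one_smul])
    rcases mul_self_eq_one_iff.mp hε2 with hε | hε
    · have hf1w : ρ (wf1 m1 m2) w = w := by rw [hFw, hε, one_smul]
      obtain ⟨ρ', hIs, hEq⟩ := case2First ρ h2 hz hirr hm1odd hl2odd hl2pos hl2lt hw hr1
        hf1w hbw'
      exact Or.inr (Or.inl ⟨hm1odd, ℓ2, hl2odd, hl2pos, hl2lt, ρ', hIs, hEq⟩)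
    · set u := ρ (wf2 m1 m2) w with hudef
      have hu : u ≠ 0 := rho_ne_zero ρ _ hw
      have hFw' : ρ (wf1 m1 m2) w = -w := by rw [hFw, hε, neg_one_smul]
      have hf1u : ρ (wf1 m1 m2) u = u := by
        have h := act_f2_f1 ρ hz w
        rw [hFw', map_neg, ← hudef] at h
        have := neg_injective h
        rw [← this]
      have hbu : ρ (wr2 m1 m2) u = ζ m2 ^ (2 * (m2:ℤ) - ℓ2) • u := by
        rw [hudef, act_r2_f2 ρ w, eigen_inv ρ _ hκ0 hbw, map_smul, hκζ, zeta_fold h2]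
      have hodd' : Odd (2 * (m2:ℤ) - ℓ2) :=
        Even.sub_odd ⟨(m2:ℤ), by ring⟩ hl2odd
      obtain ⟨ρ', hIs, hEq⟩ := case2First ρ h2 hz hirr hm1odd hodd'
        (by omega) (by omega) hu hr1 hf1u hbu
      exact Or.inr (Or.inl ⟨hm1odd, 2 * (m2:ℤ) - ℓ2, hodd', by omega, by omega, ρ', hIs, hEq⟩)
  · by_cases hdeg2 : ν * ν = 1
    · -- r2 acts as -1 : two-dimensional rep of the second kind
      have hν : ν = -1 := by
        rcases mul_self_eq_one_iff.mp hdeg2 with h | h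
        · exfalso; rw [h, one_pow] at hνm; norm_num at hνm
        · exact h
      have hr2 : ∀ x, ρ (wr2 m1 m2) x = -x :=
        global_neg_r2 ρ hz hirr hv (by rw [hbv, hν, neg_one_smul])
      have hm2odd : Odd m2 := by
        by_contra hev
        rw [Nat.not_odd_iff_even] at hev
        rw [hν, hev.neg_one_pow] at hνm
        norm_num at hνm
      obtain ⟨ε, κ, w, hw, hFw, haw⟩ :=
        exists_common_eigenvector (ρ (wf2 m1 m2)) (ρ (wr1 m1 m2))
          (fun x => (act_r1_f2 ρ x).symm)
      have hκm : κ ^ m1 = -1 := eigen_of_pow_neg_one ρ hz hw haw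
      have hκ0 : κ ≠ 0 := by
        intro h; rw [h, zero_pow (by omega : m1 ≠ 0)] at hκm; norm_num at hκm
      obtain ⟨ℓ1, hl1odd, hl1pos, hl1lt, hκζ⟩ := exists_ell h1 hκm
      have haw' : ρ (wr1 m1 m2) w = ζ m1 ^ ℓ1 • w := by rw [haw, hκζ]
      have hFFw := act_f2_f2 ρ w
      rw [hFw, map_smul, hFw, smul_smul] at hFFw
      have hε2 : ε * ε = 1 := scalar_eq_of_smul hw (by rw [hFFw, one_smul])
      rcases mul_self_eq_one_iff.mp hε2 with hε | hε
      · have hf2w : ρ (wf2 m1 m2) w = w := by rw [hFw, hε, one_smul]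
        obtain ⟨ρ', hIs, hEq⟩ := case2Second ρ h1 hz hirr hm2odd hl1odd hw hr2 hf2w haw'
        exact Or.inr (Or.inr ⟨hm2odd, ℓ1, hl1odd, hl1pos, hl1lt, ρ', hIs, hEq⟩)
      · set u := ρ (wf1 m1 m2) w with hudef
        have hu : u ≠ 0 := rho_ne_zero ρ _ hw
        have hFw' : ρ (wf2 m1 m2) w = -w := by rw [hFw, hε, neg_one_smul]
        have hf2u : ρ (wf2 m1 m2) u = u := by
          rw [hudef, act_f2_f1 ρ hz w, hFw', map_neg, neg_neg]
        have hau : ρ (wr1 m1 m2) u = ζ m1 ^ (2 * (m1:ℤ) - ℓ1) • u := by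
          rw [hudef, act_r1_f1 ρ w, eigen_inv ρ _ hκ0 haw, map_smul, hκζ, zeta_fold h1]
        have hodd' : Odd (2 * (m1:ℤ) - ℓ1) :=
          Even.sub_odd ⟨(m1:ℤ), by ring⟩ hl1odd
        obtain ⟨ρ', hIs, hEq⟩ := case2Second ρ h1 hz hirr hm2odd hodd' hu hr2 hf2u hau
        exact Or.inr (Or.inr ⟨hm2odd, 2 * (m1:ℤ) - ℓ1, hodd', by omega, by omega, ρ', hIs, hEq⟩)
    · -- the four-dimensional case
      have hμ0 : μ ≠ 0 := by
        intro h; rw [h, zero_pow (by omega : m1 ≠ 0)] at hμm; norm_num at hμm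
      have hν0 : ν ≠ 0 := by
        intro h; rw [h, zero_pow (by omega : m2 ≠ 0)] at hνm; norm_num at hνm
      obtain ⟨ℓ1, hl1odd, hl1pos, hl1lt, hμζ⟩ := exists_ell h1 hμm
      have hne1 : ℓ1 ≠ (m1:ℤ) := by
        intro h
        apply hdeg1
        rw [hμζ, h, zpow_natCast, zeta_pow_m h1]
        norm_num
      obtain ⟨ℓ2, hl2odd, hl2pos, hl2lt, hνζ⟩ := exists_ell h2 hνm
      have hne2 : ℓ2 ≠ (m2:ℤ) := by
        intro h
        apply hdeg2
        rw [hνζ, h, zpow_natCast, zeta_pow_m h2]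
        norm_num
      have hav' : ρ (wr1 m1 m2) v = ζ m1 ^ ℓ1 • v := by rw [hav, hμζ]
      have hbv' : ρ (wr2 m1 m2) v = ν • v := hbv
      obtain ⟨ℓ1', hodd1', hpos1', hlt1', v1, hv1, hav1, hbv1⟩ :
          ∃ ℓ1' : ℤ, Odd ℓ1' ∧ 0 < ℓ1' ∧ ℓ1' < (m1:ℤ) ∧ ∃ v1 : V, v1 ≠ 0 ∧
            ρ (wr1 m1 m2) v1 = ζ m1 ^ ℓ1' • v1 ∧ ρ (wr2 m1 m2) v1 = ν • v1 := by
        rcases lt_or_gt_of_ne hne1 with hlt | hgt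
        · exact ⟨ℓ1, hl1odd, hl1pos, hlt, v, hv, hav', hbv'⟩
        · refine ⟨2 * (m1:ℤ) - ℓ1, Even.sub_odd ⟨(m1:ℤ), by ring⟩ hl1odd,
            by omega, by omega, ρ (wf1 m1 m2) v, rho_ne_zero ρ _ hv, ?_, ?_⟩
          · rw [act_r1_f1 ρ v, eigen_inv ρ _ (zpow_ne_zero _ hζ1) hav', map_smul, zeta_fold h1]
          · rw [act_r2_f1 ρ v, hbv', map_smul]
      have hbv1' : ρ (wr2 m1 m2) v1 = ζ m2 ^ ℓ2 • v1 := by rw [hbv1, hνζ]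
      obtain ⟨ℓ2', hodd2', hpos2', hlt2', v2, hv2, hav2, hbv2⟩ :
          ∃ ℓ2' : ℤ, Odd ℓ2' ∧ 0 < ℓ2' ∧ ℓ2' < (m2:ℤ) ∧ ∃ v2 : V, v2 ≠ 0 ∧
            ρ (wr1 m1 m2) v2 = ζ m1 ^ ℓ1' • v2 ∧ ρ (wr2 m1 m2) v2 = ζ m2 ^ ℓ2' • v2 := by
        rcases lt_or_gt_of_ne hne2 with hlt | hgt
        · exact ⟨ℓ2, hl2odd, hl2pos, hlt, v1, hv1, hav1, hbv1'⟩
        · refine ⟨2 * (m2:ℤ) - ℓ2, Even.sub_odd ⟨(m2:ℤ), by ring⟩ hl2odd,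
            by omega, by omega, ρ (wf2 m1 m2) v1, rho_ne_zero ρ _ hv1, ?_, ?_⟩
          · rw [act_r1_f2 ρ v1, hav1, map_smul]
          · rw [act_r2_f2 ρ v1, eigen_inv ρ _ (zpow_ne_zero _ hζ2) hbv1', map_smul,
              zeta_fold h2]
      obtain ⟨ρ', hIs, hEq⟩ := case4 ρ h1 h2 hz hirr hodd1' hodd2' hpos1' hlt1' hpos2' hlt2'
        hv2 hav2 hbv2
      exact Or.inl ⟨ℓ1', ℓ2', hodd1', hodd2', hpos1', hlt1', hpos2', hlt2', ρ', hIs, hEq⟩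

end Stmt10
end

section
/- Let m1, m2 ≥ 1 and let W̃ = W̃(m1,m2). The assignments z ↦ −1, f1 ↦ ι(α_{m1}), f2 ↦ ι(β_{m2}), r1 ↦ −ι(α_{m1})·ι(α_1), r2 ↦ −ι(β_{m2})·ι(β_1) respect all defining relations of W̃ (in particular ι(α_p)² = 1, ι(β_q)² = 1, (ι(α_p)ι(β_q))² = −1 in 𝒞) and hence define a group homomorphism from W̃ to the group of units of the Clifford algebra 𝒞; moreover this homomorphism is injective. -/
namespace Stmt13

/-- Generators of the double cover `W̃(m1, m2)`. -/
inductive Gen | z | r1 | f1 | r2 | f2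

open FreeGroup in
/-- Defining relations of `W̃(m1, m2)`:
`r1^{m1} = z`, `r2^{m2} = z`, `f1^2 = 1`, `f2^2 = 1`, `(r1 f1)^2 = 1`, `(r2 f2)^2 = 1`,
`r1 r2 = r2 r1`, `r1 f2 = f2 r1`, `r2 f1 = f1 r2`, `(f1 f2)^2 = z`, `z^2 = 1`. -/
def rels (m1 m2 : ℕ) : Set (FreeGroup Gen) :=
  { of Gen.r1 ^ m1 * (of Gen.z)⁻¹,
    of Gen.r2 ^ m2 * (of Gen.z)⁻¹,
    of Gen.f1 ^ 2,
    of Gen.f2 ^ 2,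
    (of Gen.r1 * of Gen.f1) ^ 2,
    (of Gen.r2 * of Gen.f2) ^ 2,
    of Gen.r1 * of Gen.r2 * (of Gen.r2 * of Gen.r1)⁻¹,
    of Gen.r1 * of Gen.f2 * (of Gen.f2 * of Gen.r1)⁻¹,
    of Gen.r2 * of Gen.f1 * (of Gen.f1 * of Gen.r2)⁻¹,
    (of Gen.f1 * of Gen.f2) ^ 2 * (of Gen.z)⁻¹,
    of Gen.z ^ 2 }

/-- The double cover `W̃(m1, m2)` of `D_{2m1} × D_{2m2}`, as a presented group. -/
abbrev Wt (m1 m2 : ℕ) := PresentedGroup (rels m1 m2)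

def wz (m1 m2 : ℕ) : Wt m1 m2 := PresentedGroup.of Gen.z
def wr1 (m1 m2 : ℕ) : Wt m1 m2 := PresentedGroup.of Gen.r1
def wf1 (m1 m2 : ℕ) : Wt m1 m2 := PresentedGroup.of Gen.f1
def wr2 (m1 m2 : ℕ) : Wt m1 m2 := PresentedGroup.of Gen.r2
def wf2 (m1 m2 : ℕ) : Wt m1 m2 := PresentedGroup.of Gen.f2

/-- The quadratic form `Q(x) = x1² + x2² + x3² + x4²` on `ℂ⁴`. -/
noncomputable def Q4 : QuadraticForm ℂ (Fin 4 → ℂ) :=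
  QuadraticMap.weightedSumSquares ℂ (fun _ : Fin 4 => (1 : ℂ))

/-- The Clifford algebra `𝒞` of `Q4`. -/
abbrev Cl := CliffordAlgebra Q4

/-- The canonical generators `e_j = ι(standard basis vector)` of `𝒞`. -/
noncomputable def eC (j : Fin 4) : Cl := CliffordAlgebra.ι Q4 (Pi.single j 1)

/-- `θ_a = (e_{2a−1} + i e_{2a})/2` for `a ∈ {1,2}` (0-indexed `a : Fin 2`). -/
noncomputable def θ (a : Fin 2) : Cl :=
  (2 : ℂ)⁻¹ • (eC ⟨2 * a.val, by have := a.isLt; omega⟩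
    + Complex.I • eC ⟨2 * a.val + 1, by have := a.isLt; omega⟩)

/-- `θ̄_a = (e_{2a−1} − i e_{2a})/2` for `a ∈ {1,2}` (0-indexed `a : Fin 2`). -/
noncomputable def θbar (a : Fin 2) : Cl :=
  (2 : ℂ)⁻¹ • (eC ⟨2 * a.val, by have := a.isLt; omega⟩
    - Complex.I • eC ⟨2 * a.val + 1, by have := a.isLt; omega⟩)

/-- The root `α_p = (sin(pπ/m1), −cos(pπ/m1), 0, 0)` as a vector in `ℂ⁴`. -/
noncomputable def α (m1 : ℕ) (p : ℤ) : Fin 4 → ℂ :=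
  ![(Real.sin (p * Real.pi / m1) : ℂ), -(Real.cos (p * Real.pi / m1) : ℂ), 0, 0]

/-- The root `β_q = (0, 0, sin(qπ/m2), −cos(qπ/m2))` as a vector in `ℂ⁴`. -/
noncomputable def β (m2 : ℕ) (q : ℤ) : Fin 4 → ℂ :=
  ![0, 0, (Real.sin (q * Real.pi / m2) : ℂ), -(Real.cos (q * Real.pi / m2) : ℂ)]


section CliffordSide
open CliffordAlgebra

lemma Q4_apply (v : Fin 4 → ℂ) : Q4 v = v 0 * v 0 + v 1 * v 1 + v 2 * v 2 + v 3 * v 3 := by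
  simp [Q4, QuadraticMap.weightedSumSquares_apply, Fin.sum_univ_four]

lemma polar_Q4 (u v : Fin 4 → ℂ) :
    QuadraticMap.polar Q4 u v = 2*(u 0 * v 0 + u 1 * v 1 + u 2 * v 2 + u 3 * v 3) := by
  simp [QuadraticMap.polar, Q4, QuadraticMap.weightedSumSquares_apply, Fin.sum_univ_four]
  ring

lemma Q4_α (m1 : ℕ) (p : ℤ) : Q4 (α m1 p) = 1 := by
  rw [Q4_apply]
  simp [α]
  norm_cast
  have := Real.sin_sq_add_cos_sq (p * Real.pi / m1)
  nlinarith [this]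

lemma ια_sq (m1 : ℕ) (p : ℤ) : ι Q4 (α m1 p) * ι Q4 (α m1 p) = 1 := by
  rw [ι_sq_scalar, Q4_α, map_one]

lemma Q4_β (m2 : ℕ) (q : ℤ) : Q4 (β m2 q) = 1 := by
  rw [Q4_apply]
  simp [β]
  norm_cast
  have := Real.sin_sq_add_cos_sq (q * Real.pi / m2)
  nlinarith [this]

lemma ιβ_sq (m2 : ℕ) (q : ℤ) : ι Q4 (β m2 q) * ι Q4 (β m2 q) = 1 := by
  rw [ι_sq_scalar, Q4_β, map_one]

lemma anticomm (m1 m2 : ℕ) (p q : ℤ) :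
    ι Q4 (α m1 p) * ι Q4 (β m2 q) = - (ι Q4 (β m2 q) * ι Q4 (α m1 p)) := by
  have h := CliffordAlgebra.ι_mul_ι_add_swap (Q := Q4) (α m1 p) (β m2 q)
  have hp : (2:ℂ)*((α m1 p) 0 * (β m2 q) 0 + (α m1 p) 1 * (β m2 q) 1
      + (α m1 p) 2 * (β m2 q) 2 + (α m1 p) 3 * (β m2 q) 3) = 0 := by
    simp [α, β]
  rw [polar_Q4, hp, map_zero] at h
  exact eq_neg_of_add_eq_zero_left h

lemma αβ_sq (m1 m2 : ℕ) (p q : ℤ) :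
    (ι Q4 (α m1 p) * ι Q4 (β m2 q)) * (ι Q4 (α m1 p) * ι Q4 (β m2 q)) = -1 := by
  set x := ι Q4 (α m1 p) with hx
  set y := ι Q4 (β m2 q) with hy
  have h' : y * x = -(x * y) := by rw [anticomm m1 m2 p q, neg_neg]
  have h2 : x * x = 1 := ια_sq m1 p
  have h3 : y * y = 1 := ιβ_sq m2 q
  calc x * y * (x * y) = x * (y * x * y) := by rw [mul_assoc, mul_assoc]
    _ = x * (-(x * y) * y) := by rw [h']
    _ = x * -(x * (y * y)) := by rw [neg_mul, mul_assoc]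
    _ = -(x * x) := by rw [h3, mul_one, mul_neg]
    _ = -1 := by rw [h2]


-- eC lemmas

lemma eC_sq (j : Fin 4) : eC j * eC j = 1 := by
  rw [eC, ι_sq_scalar]
  have : Q4 (Pi.single j (1:ℂ)) = 1 := by
    rw [Q4_apply]; fin_cases j <;> simp
  rw [this, map_one]

lemma eC_anticomm {i j : Fin 4} (h : i ≠ j) : eC i * eC j = -(eC j * eC i) := by
  have hpol := ι_mul_ι_add_swap (Q := Q4) (Pi.single i (1:ℂ)) (Pi.single j 1)
  have : QuadraticMap.polar Q4 (Pi.single i (1:ℂ)) (Pi.single j 1) = 0 := by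
    rw [polar_Q4]; fin_cases i <;> fin_cases j <;> simp_all
  rw [this, map_zero] at hpol
  exact eq_neg_of_add_eq_zero_left hpol

noncomputable def J1 : Cl := eC 0 * eC 1
noncomputable def J2 : Cl := eC 2 * eC 3

lemma J1_sq : J1 * J1 = -1 := by
  have h01 : eC 1 * eC 0 = -(eC 0 * eC 1) := eC_anticomm (by decide)
  calc J1 * J1 = eC 0 * (eC 1 * eC 0 * eC 1) := by rw [J1]; noncomm_ring
    _ = eC 0 * (-(eC 0 * (eC 1 * eC 1))) := by rw [h01]; noncomm_ring
    _ = -(eC 0 * eC 0) := by rw [eC_sq]; noncomm_ring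
    _ = -1 := by rw [eC_sq]

lemma J2_sq : J2 * J2 = -1 := by
  have h01 : eC 3 * eC 2 = -(eC 2 * eC 3) := eC_anticomm (by decide)
  calc J2 * J2 = eC 2 * (eC 3 * eC 2 * eC 3) := by rw [J2]; noncomm_ring
    _ = eC 2 * (-(eC 2 * (eC 3 * eC 3))) := by rw [h01]; noncomm_ring
    _ = -(eC 2 * eC 2) := by rw [eC_sq]; noncomm_ring
    _ = -1 := by rw [eC_sq]

-- rotations
noncomputable def Rot (J : Cl) (t : ℝ) : Cl :=
  algebraMap ℂ Cl (Real.cos t) + (Real.sin t : ℂ) • J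

lemma rot_alg (a b c d : ℂ) {J : Cl} (hJ : J * J = -1) :
    (algebraMap ℂ Cl a + b • J) * (algebraMap ℂ Cl c + d • J)
      = algebraMap ℂ Cl (a*c - b*d) + (a*d + b*c) • J := by
  simp only [Algebra.smul_def, map_mul, map_add, map_sub]
  rw [add_mul, mul_add, mul_add, mul_assoc (algebraMap ℂ Cl b) J (algebraMap ℂ Cl c),
    ← Algebra.commutes c J]
  have hd : J * (algebraMap ℂ Cl d * J) = algebraMap ℂ Cl d * (J * J) := by
    rw [← mul_assoc, ← Algebra.commutes d J, mul_assoc]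
  rw [mul_assoc (algebraMap ℂ Cl b) J (algebraMap ℂ Cl d * J), hd, hJ]
  noncomm_ring

lemma Rot_mul {J : Cl} (hJ : J * J = -1) (s t : ℝ) :
    Rot J s * Rot J t = Rot J (s + t) := by
  unfold Rot
  rw [rot_alg _ _ _ _ hJ, Real.cos_add, Real.sin_add]
  push_cast
  ring_nf

lemma Rot_zero (J : Cl) : Rot J 0 = 1 := by simp [Rot]

lemma Rot_pi (J : Cl) : Rot J Real.pi = -1 := by simp [Rot, Complex.ofReal_neg, map_neg]

lemma Rot_pow {J : Cl} (hJ : J * J = -1) (t : ℝ) (n : ℕ) :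
    (Rot J t) ^ n = Rot J (n * t) := by
  induction n with
  | zero => simp [Rot_zero]
  | succ n ih =>
      rw [pow_succ, ih, Rot_mul hJ]
      congr 1
      push_cast
      ring


section
variable {m1 m2 : ℕ} (h1 : 1 ≤ m1) (h2 : 1 ≤ m2)

lemma α_decomp (p : ℤ) :
    α m1 p = (Real.sin (p * Real.pi / m1) : ℂ) • (Pi.single 0 1 : Fin 4 → ℂ)
      + (-(Real.cos (p * Real.pi / m1) : ℂ)) • (Pi.single 1 1 : Fin 4 → ℂ) := by
  funext j
  fin_cases j <;> simp [α]

lemma β_decomp (q : ℤ) :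
    β m2 q = (Real.sin (q * Real.pi / m2) : ℂ) • (Pi.single 2 1 : Fin 4 → ℂ)
      + (-(Real.cos (q * Real.pi / m2) : ℂ)) • (Pi.single 3 1 : Fin 4 → ℂ) := by
  funext j
  fin_cases j <;> simp [β]

include h1 in
lemma α_top : α m1 m1 = Pi.single 1 1 := by
  have hm : (m1:ℝ) ≠ 0 := Nat.cast_ne_zero.mpr (by omega)
  have hang : ((m1:ℤ) : ℝ) * Real.pi / m1 = Real.pi := by
    push_cast; field_simp
  rw [α_decomp]
  rw [hang]
  simp [Real.sin_pi, Real.cos_pi]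

include h2 in
lemma β_top : β m2 m2 = Pi.single 3 1 := by
  have hm : (m2:ℝ) ≠ 0 := Nat.cast_ne_zero.mpr (by omega)
  have hang : ((m2:ℤ) : ℝ) * Real.pi / m2 = Real.pi := by
    push_cast; field_simp
  rw [β_decomp]
  rw [hang]
  simp [Real.sin_pi, Real.cos_pi]

include h1 in
lemma r1_val (p : ℤ) :
    -(CliffordAlgebra.ι Q4 (α m1 m1) * CliffordAlgebra.ι Q4 (α m1 p))
      = Rot J1 (p * Real.pi / m1) := by
  rw [α_top h1, α_decomp p, map_add, map_smul, map_smul]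
  set s := (Real.sin (p * Real.pi / m1) : ℂ)
  set c := (Real.cos (p * Real.pi / m1) : ℂ)
  have h10 : eC 1 * eC 0 = -(eC 0 * eC 1) := eC_anticomm (by decide)
  show -(eC 1 * (s • eC 0 + (-c) • eC 1)) = _
  rw [mul_add, mul_smul_comm, mul_smul_comm, h10, eC_sq]
  rw [Rot]
  rw [Algebra.algebraMap_eq_smul_one]
  show -(s • -J1 + (-c) • 1) = c • (1:Cl) + s • J1
  rw [smul_neg, neg_smul]
  abel

include h2 in
lemma r2_val (q : ℤ) :
    -(CliffordAlgebra.ι Q4 (β m2 m2) * CliffordAlgebra.ι Q4 (β m2 q))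
      = Rot J2 (q * Real.pi / m2) := by
  rw [β_top h2, β_decomp q, map_add, map_smul, map_smul]
  set s := (Real.sin (q * Real.pi / m2) : ℂ)
  set c := (Real.cos (q * Real.pi / m2) : ℂ)
  have h10 : eC 3 * eC 2 = -(eC 2 * eC 3) := eC_anticomm (by decide)
  show -(eC 3 * (s • eC 2 + (-c) • eC 3)) = _
  rw [mul_add, mul_smul_comm, mul_smul_comm, h10, eC_sq]
  rw [Rot, Algebra.algebraMap_eq_smul_one]
  show -(s • -J2 + (-c) • 1) = c • (1:Cl) + s • J2
  rw [smul_neg, neg_smul]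
  abel

include h1 in
lemma r1_pow_top : (-(CliffordAlgebra.ι Q4 (α m1 m1) * CliffordAlgebra.ι Q4 (α m1 1))) ^ m1 = -1 := by
  have hm : (m1:ℝ) ≠ 0 := Nat.cast_ne_zero.mpr (by omega)
  rw [r1_val h1, Rot_pow J1_sq]
  have : (m1:ℝ) * (((1:ℤ):ℝ) * Real.pi / m1) = Real.pi := by
    push_cast; field_simp
  rw [this, Rot_pi]

include h2 in
lemma r2_pow_top : (-(CliffordAlgebra.ι Q4 (β m2 m2) * CliffordAlgebra.ι Q4 (β m2 1))) ^ m2 = -1 := by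
  have hm : (m2:ℝ) ≠ 0 := Nat.cast_ne_zero.mpr (by omega)
  rw [r2_val h2, Rot_pow J2_sq]
  have : (m2:ℝ) * (((1:ℤ):ℝ) * Real.pi / m2) = Real.pi := by
    push_cast; field_simp
  rw [this, Rot_pi]

end

end CliffordSide

section GroupSide

section WtRels
variable (m1 m2 : ℕ)

lemma rel_eq_one {r : FreeGroup Gen} (hr : r ∈ rels m1 m2) :
    PresentedGroup.mk (rels m1 m2) r = 1 :=
  (QuotientGroup.eq_one_iff r).mpr (Subgroup.subset_normalClosure hr)

local notation "Z" => wz m1 m2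
local notation "R1" => wr1 m1 m2
local notation "R2" => wr2 m1 m2
local notation "F1" => wf1 m1 m2
local notation "F2" => wf2 m1 m2

lemma wrel_r1 : R1 ^ m1 = Z := by
  have := rel_eq_one m1 m2 (show _ ∈ rels m1 m2 from Set.mem_insert _ _)
  rw [map_mul, map_pow, map_inv] at this
  exact mul_inv_eq_one.mp this

lemma wrel_r2 : R2 ^ m2 = Z := by
  have := rel_eq_one m1 m2 (show _ ∈ rels m1 m2 from
    Set.mem_insert_of_mem _ (Set.mem_insert _ _))
  rw [map_mul, map_pow, map_inv] at this
  exact mul_inv_eq_one.mp this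

lemma wrel_f1 : F1 * F1 = 1 := by
  have := rel_eq_one m1 m2 (show _ ∈ rels m1 m2 from
    Set.mem_insert_of_mem _ (Set.mem_insert_of_mem _ (Set.mem_insert _ _)))
  rw [map_pow, pow_two] at this
  exact this

lemma wrel_f2 : F2 * F2 = 1 := by
  have := rel_eq_one m1 m2 (show _ ∈ rels m1 m2 from
    Set.mem_insert_of_mem _ (Set.mem_insert_of_mem _ (Set.mem_insert_of_mem _ (Set.mem_insert _ _))))
  rw [map_pow, pow_two] at this
  exact this

lemma wrel_r1f1 : (R1 * F1) * (R1 * F1) = 1 := by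
  have := rel_eq_one m1 m2 (show _ ∈ rels m1 m2 from
    Set.mem_insert_of_mem _ (Set.mem_insert_of_mem _ (Set.mem_insert_of_mem _ (Set.mem_insert_of_mem _ (Set.mem_insert _ _)))))
  rw [map_pow, pow_two, map_mul] at this
  exact this

lemma wrel_r2f2 : (R2 * F2) * (R2 * F2) = 1 := by
  have := rel_eq_one m1 m2 (show _ ∈ rels m1 m2 from
    Set.mem_insert_of_mem _ (Set.mem_insert_of_mem _ (Set.mem_insert_of_mem _ (Set.mem_insert_of_mem _ (Set.mem_insert_of_mem _ (Set.mem_insert _ _))))))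
  rw [map_pow, pow_two, map_mul] at this
  exact this

lemma wrel_comm_rr : R1 * R2 = R2 * R1 := by
  have := rel_eq_one m1 m2 (show _ ∈ rels m1 m2 from
    Set.mem_insert_of_mem _ (Set.mem_insert_of_mem _ (Set.mem_insert_of_mem _ (Set.mem_insert_of_mem _ (Set.mem_insert_of_mem _ (Set.mem_insert_of_mem _ (Set.mem_insert _ _)))))))
  rw [map_mul, map_inv, map_mul, map_mul] at this
  exact mul_inv_eq_one.mp this

lemma wrel_comm_r1f2 : R1 * F2 = F2 * R1 := by
  have := rel_eq_one m1 m2 (show _ ∈ rels m1 m2 from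
    Set.mem_insert_of_mem _ (Set.mem_insert_of_mem _ (Set.mem_insert_of_mem _ (Set.mem_insert_of_mem _ (Set.mem_insert_of_mem _ (Set.mem_insert_of_mem _ (Set.mem_insert_of_mem _ (Set.mem_insert _ _))))))))
  rw [map_mul, map_inv, map_mul, map_mul] at this
  exact mul_inv_eq_one.mp this

lemma wrel_comm_r2f1 : R2 * F1 = F1 * R2 := by
  have := rel_eq_one m1 m2 (show _ ∈ rels m1 m2 from
    Set.mem_insert_of_mem _ (Set.mem_insert_of_mem _ (Set.mem_insert_of_mem _ (Set.mem_insert_of_mem _ (Set.mem_insert_of_mem _ (Set.mem_insert_of_mem _ (Set.mem_insert_of_mem _ (Set.mem_insert_of_mem _ (Set.mem_insert _ _)))))))))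
  rw [map_mul, map_inv, map_mul, map_mul] at this
  exact mul_inv_eq_one.mp this

lemma wrel_ff : (F1 * F2) * (F1 * F2) = Z := by
  have := rel_eq_one m1 m2 (show _ ∈ rels m1 m2 from
    Set.mem_insert_of_mem _ (Set.mem_insert_of_mem _ (Set.mem_insert_of_mem _ (Set.mem_insert_of_mem _ (Set.mem_insert_of_mem _ (Set.mem_insert_of_mem _ (Set.mem_insert_of_mem _ (Set.mem_insert_of_mem _ (Set.mem_insert_of_mem _ (Set.mem_insert _ _))))))))))
  rw [map_mul, map_pow, pow_two, map_mul, map_inv] at this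
  exact mul_inv_eq_one.mp this

lemma wrel_z2 : Z * Z = 1 := by
  have := rel_eq_one m1 m2 (show _ ∈ rels m1 m2 from
    Set.mem_insert_of_mem _ (Set.mem_insert_of_mem _ (Set.mem_insert_of_mem _ (Set.mem_insert_of_mem _ (Set.mem_insert_of_mem _ (Set.mem_insert_of_mem _ (Set.mem_insert_of_mem _ (Set.mem_insert_of_mem _ (Set.mem_insert_of_mem _ (Set.mem_insert_of_mem _ (Set.mem_singleton_iff.mpr rfl)))))))))))
  rw [map_pow, pow_two] at this
  exact this


-- derived facts
lemma wf1_inv : F1⁻¹ = F1 := inv_eq_of_mul_eq_one_right (wrel_f1 m1 m2)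
lemma wf2_inv : F2⁻¹ = F2 := inv_eq_of_mul_eq_one_right (wrel_f2 m1 m2)

lemma wz_central_r1 : Commute Z R1 := by
  rw [← wrel_r1 m1 m2]; exact (Commute.refl R1).pow_left m1
lemma wz_central_r2 : Commute Z R2 := by
  rw [← wrel_r2 m1 m2]; exact (Commute.refl R2).pow_left m2
lemma wz_central_f1 : Commute Z F1 := by
  rw [← wrel_r2 m1 m2]
  have hc : Commute R2 F1 := wrel_comm_r2f1 m1 m2
  exact hc.pow_left m2
lemma wz_central_f2 : Commute Z F2 := by
  rw [← wrel_r1 m1 m2]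
  have hc : Commute R1 F2 := wrel_comm_r1f2 m1 m2
  exact hc.pow_left m1

lemma wf1_conj_r1 : F1 * R1 = R1⁻¹ * F1 := by
  have h := wrel_r1f1 m1 m2
  have : R1 * (F1 * R1 * F1) = 1 := by
    rw [← h]; group
  have h2 : F1 * R1 * F1 = R1⁻¹ := by
    rw [← eq_inv_of_mul_eq_one_right this]
  calc F1 * R1 = F1 * R1 * F1 * F1⁻¹ := by group
    _ = R1⁻¹ * F1 := by rw [h2, wf1_inv]

lemma wf2_conj_r2 : F2 * R2 = R2⁻¹ * F2 := by
  have h := wrel_r2f2 m1 m2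
  have : R2 * (F2 * R2 * F2) = 1 := by
    rw [← h]; group
  have h2 : F2 * R2 * F2 = R2⁻¹ := by
    rw [← eq_inv_of_mul_eq_one_right this]
  calc F2 * R2 = F2 * R2 * F2 * F2⁻¹ := by group
    _ = R2⁻¹ * F2 := by rw [h2, wf2_inv]

lemma wf2_mul_f1 : F2 * F1 = Z * (F1 * F2) := by
  have h := wrel_ff m1 m2
  have hz := wrel_z2 m1 m2
  calc F2 * F1 = Z * (Z * (F2 * F1)) := by rw [← mul_assoc, hz, one_mul]
    _ = Z * ((F1 * F2 * (F1 * F2)) * (F2 * F1)) := by rw [h]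
    _ = Z * (F1 * (F2 * (F1 * (F2 * (F2 * F1))))) := by group
    _ = Z * (F1 * F2) := by
        rw [← mul_assoc F2 F2 F1, wrel_f2, one_mul, wrel_f1, mul_one]

-- zpow versions
lemma wf1_conj_r1_zpow (k : ℤ) : F1 * R1 ^ k = R1 ^ (-k) * F1 := by
  have h : F1 * R1 * F1⁻¹ = R1⁻¹ := by
    rw [wf1_conj_r1]; group
  have := congrArg (· ^ k) h
  simp only [conj_zpow] at this
  rw [inv_zpow, ← zpow_neg] at this
  calc F1 * R1 ^ k = F1 * R1 ^ k * F1⁻¹ * F1 := by group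
    _ = R1 ^ (-k) * F1 := by rw [this]

lemma wf2_conj_r2_zpow (k : ℤ) : F2 * R2 ^ k = R2 ^ (-k) * F2 := by
  have h : F2 * R2 * F2⁻¹ = R2⁻¹ := by
    rw [wf2_conj_r2]; group
  have := congrArg (· ^ k) h
  simp only [conj_zpow] at this
  rw [inv_zpow, ← zpow_neg] at this
  calc F2 * R2 ^ k = F2 * R2 ^ k * F2⁻¹ * F2 := by group
    _ = R2 ^ (-k) * F2 := by rw [this]

lemma wcomm_rr_zpow (a b : ℤ) : R1 ^ a * R2 ^ b = R2 ^ b * R1 ^ a :=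
  (Commute.zpow_zpow (wrel_comm_rr m1 m2) a b)

lemma wcomm_f2r1_zpow (k : ℤ) : F2 * R1 ^ k = R1 ^ k * F2 := by
  have hc : Commute R1 F2 := wrel_comm_r1f2 m1 m2
  exact hc.symm.zpow_right k

lemma wcomm_f1r2_zpow (k : ℤ) : F1 * R2 ^ k = R2 ^ k * F1 := by
  have hc : Commute R2 F1 := wrel_comm_r2f1 m1 m2
  exact hc.symm.zpow_right k


/-- normal form -/
def nf (a b : ℤ) (c d : Bool) : Wt m1 m2 :=
  R1 ^ a * R2 ^ b * (cond c F1 1) * (cond d F2 1)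

lemma nf_one : nf m1 m2 0 0 false false = 1 := by simp [nf]

lemma wz_eq_nf : Z = nf m1 m2 m1 0 false false := by
  simp [nf, zpow_natCast, wrel_r1 m1 m2]

lemma wr1_eq_nf : R1 = nf m1 m2 1 0 false false := by simp [nf]
lemma wr2_eq_nf : R2 = nf m1 m2 0 1 false false := by simp [nf]
lemma wf1_eq_nf : F1 = nf m1 m2 0 0 true false := by simp [nf]
lemma wf2_eq_nf : F2 = nf m1 m2 0 0 false true := by simp [nf]

lemma nf_mul_r1pow (a b : ℤ) (c d : Bool) (k : ℤ) :
    nf m1 m2 a b c d * R1 ^ k = nf m1 m2 (a + (cond c (-k) k)) b c d := by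
  have hpass : (cond c F1 1 : Wt m1 m2) * (cond d F2 1) * R1 ^ k
      = R1 ^ (cond c (-k) k) * ((cond c F1 1) * (cond d F2 1)) := by
    cases c <;> cases d <;>
      simp only [cond_true, cond_false, one_mul, mul_one]
    · rw [wcomm_f2r1_zpow]
    · rw [wf1_conj_r1_zpow]
    · rw [mul_assoc, wcomm_f2r1_zpow, ← mul_assoc, wf1_conj_r1_zpow, mul_assoc]
  calc nf m1 m2 a b c d * R1 ^ k
      = R1 ^ a * R2 ^ b * ((cond c F1 1) * (cond d F2 1) * R1 ^ k) := by
        unfold nf; group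
    _ = R1 ^ a * R2 ^ b * (R1 ^ (cond c (-k) k) * ((cond c F1 1) * (cond d F2 1))) := by
        rw [hpass]
    _ = R1 ^ a * (R2 ^ b * R1 ^ (cond c (-k) k)) * ((cond c F1 1) * (cond d F2 1)) := by
        group
    _ = R1 ^ a * (R1 ^ (cond c (-k) k) * R2 ^ b) * ((cond c F1 1) * (cond d F2 1)) := by
        rw [← wcomm_rr_zpow]
    _ = nf m1 m2 (a + (cond c (-k) k)) b c d := by
        unfold nf; group

lemma nf_mul_r2pow (a b : ℤ) (c d : Bool) (k : ℤ) :
    nf m1 m2 a b c d * R2 ^ k = nf m1 m2 a (b + (cond d (-k) k)) c d := by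
  have hpass : (cond c F1 1 : Wt m1 m2) * (cond d F2 1) * R2 ^ k
      = R2 ^ (cond d (-k) k) * ((cond c F1 1) * (cond d F2 1)) := by
    cases c <;> cases d <;>
      simp only [cond_true, cond_false, one_mul, mul_one]
    · rw [wf2_conj_r2_zpow]
    · rw [wcomm_f1r2_zpow]
    · rw [mul_assoc, wf2_conj_r2_zpow, ← mul_assoc, wcomm_f1r2_zpow, mul_assoc]
  calc nf m1 m2 a b c d * R2 ^ k
      = R1 ^ a * R2 ^ b * ((cond c F1 1) * (cond d F2 1) * R2 ^ k) := by
        unfold nf; group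
    _ = R1 ^ a * R2 ^ b * (R2 ^ (cond d (-k) k) * ((cond c F1 1) * (cond d F2 1))) := by
        rw [hpass]
    _ = nf m1 m2 a (b + (cond d (-k) k)) c d := by
        unfold nf; group

lemma z_mul_nf (a b : ℤ) (c d : Bool) :
    Z * nf m1 m2 a b c d = nf m1 m2 (a + m1) b c d := by
  unfold nf
  rw [← wrel_r1 m1 m2, ← zpow_natCast R1 m1]
  group

lemma nf_mul_f1 (a b : ℤ) (c d : Bool) :
    nf m1 m2 a b c d * F1 = nf m1 m2 (a + (cond d (m1:ℤ) 0)) b (!c) d := by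
  cases d
  · cases c <;>
      simp only [nf, cond_true, cond_false, Bool.not_true, Bool.not_false, mul_one, add_zero]
    rw [mul_assoc, wrel_f1 m1 m2, mul_one]
  · have key : nf m1 m2 a b c true * F1 = Z * (nf m1 m2 a b (!c) true) := by
      cases c <;>
        simp only [nf, cond_true, cond_false, Bool.not_true, Bool.not_false, mul_one, one_mul]
      · -- c = false
        rw [mul_assoc (R1^a * R2^b) F2 F1, wf2_mul_f1 m1 m2]
        have hZ1 : Commute (R1^a * R2^b) Z :=
          ((wz_central_r1 m1 m2).zpow_right a).symm.mul_left ((wz_central_r2 m1 m2).zpow_right b).symm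
        calc R1^a * R2^b * (Z * (F1 * F2)) = (R1^a * R2^b * Z) * (F1 * F2) := by group
          _ = (Z * (R1^a * R2^b)) * (F1 * F2) := by rw [hZ1]
          _ = Z * (R1^a * R2^b * F1 * F2) := by group
      · -- c = true
        rw [mul_assoc (R1^a * R2^b * F1) F2 F1, wf2_mul_f1 m1 m2]
        have hZ1 : Commute (R1^a * R2^b * F1) Z :=
          (((wz_central_r1 m1 m2).zpow_right a).symm.mul_left
            ((wz_central_r2 m1 m2).zpow_right b).symm).mul_left (wz_central_f1 m1 m2).symm
        calc R1^a * R2^b * F1 * (Z * (F1 * F2)) = (R1^a * R2^b * F1 * Z) * (F1 * F2) := by group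
          _ = (Z * (R1^a * R2^b * F1)) * (F1 * F2) := by rw [hZ1]
          _ = Z * (R1^a * R2^b * (F1 * F1) * F2) := by group
          _ = Z * (R1^a * R2^b * F2) := by rw [wrel_f1 m1 m2, mul_one]
    rw [key, z_mul_nf]
    simp only [cond_true]

lemma nf_mul_f2 (a b : ℤ) (c d : Bool) :
    nf m1 m2 a b c d * F2 = nf m1 m2 a b c (!d) := by
  cases d <;>
    simp only [nf, cond_true, cond_false, Bool.not_true, Bool.not_false, mul_one]
  rw [mul_assoc, wrel_f2 m1 m2, mul_one]


lemma nf_mul_nf (a b a' b' : ℤ) (c d c' d' : Bool) :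
    ∃ A B C D, nf m1 m2 a b c d * nf m1 m2 a' b' c' d' = nf m1 m2 A B C D := by
  have h : nf m1 m2 a b c d * nf m1 m2 a' b' c' d'
      = ((nf m1 m2 a b c d * R1 ^ a' * R2 ^ b') * cond c' F1 1) * cond d' F2 1 := by
    unfold nf; group
  rw [h, nf_mul_r1pow, nf_mul_r2pow]
  cases c' <;> cases d' <;> simp only [cond_true, cond_false, mul_one]
  · exact ⟨_,_,_,_, rfl⟩
  · rw [nf_mul_f2]; exact ⟨_,_,_,_, rfl⟩
  · rw [nf_mul_f1]; exact ⟨_,_,_,_, rfl⟩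
  · rw [nf_mul_f1, nf_mul_f2]; exact ⟨_,_,_,_, rfl⟩

lemma nf_inv (a b : ℤ) (c d : Bool) :
    ∃ A B C D, (nf m1 m2 a b c d)⁻¹ = nf m1 m2 A B C D := by
  have hD : ((cond d F2 1 : Wt m1 m2))⁻¹ = nf m1 m2 0 0 false d := by
    cases d <;> simp [nf, wf2_inv m1 m2]
  have hC : ((cond c F1 1 : Wt m1 m2))⁻¹ = nf m1 m2 0 0 c false := by
    cases c <;> simp [nf, wf1_inv m1 m2]
  have hB : (R2 ^ b)⁻¹ = nf m1 m2 0 (-b) false false := by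
    simp [nf, zpow_neg]
  have hA : (R1 ^ a)⁻¹ = nf m1 m2 (-a) 0 false false := by
    simp [nf, zpow_neg]
  have h : (nf m1 m2 a b c d)⁻¹
      = (((cond d F2 1 : Wt m1 m2))⁻¹ * ((cond c F1 1))⁻¹) * ((R2 ^ b)⁻¹ * (R1 ^ a)⁻¹) := by
    unfold nf; group
  rw [h, hD, hC, hB, hA]
  obtain ⟨A1, B1, C1, D1, h1⟩ := nf_mul_nf m1 m2 0 0 0 0 false d c false
  rw [h1]
  obtain ⟨A2, B2, C2, D2, h2⟩ := nf_mul_nf m1 m2 0 (-b) (-a) 0 false false false false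
  rw [h2]
  exact nf_mul_nf m1 m2 A1 B1 A2 B2 C1 D1 C2 D2

lemma exists_nf (w : Wt m1 m2) : ∃ a b c d, w = nf m1 m2 a b c d := by
  let S : Subgroup (Wt m1 m2) :=
    { carrier := {w | ∃ a b c d, w = nf m1 m2 a b c d}
      one_mem' := ⟨0, 0, false, false, (nf_one m1 m2).symm⟩
      mul_mem' := by
        rintro x y ⟨a, b, c, d, rfl⟩ ⟨a', b', c', d', rfl⟩
        exact nf_mul_nf m1 m2 a b a' b' c d c' d'
      inv_mem' := by
        rintro x ⟨a, b, c, d, rfl⟩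
        exact nf_inv m1 m2 a b c d }
  have : w ∈ S := by
    refine PresentedGroup.generated_by (rels m1 m2) S (fun j => ?_) w
    cases j
    · exact ⟨m1, 0, false, false, wz_eq_nf m1 m2⟩
    · exact ⟨1, 0, false, false, wr1_eq_nf m1 m2⟩
    · exact ⟨0, 0, true, false, wf1_eq_nf m1 m2⟩
    · exact ⟨0, 1, false, false, wr2_eq_nf m1 m2⟩
    · exact ⟨0, 0, false, true, wf2_eq_nf m1 m2⟩
  exact this

end WtRels

end GroupSide

section MatrixSide
open Complex Matrix
abbrev M4 := Matrix (Fin 4) (Fin 4) ℂ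

noncomputable def Mv (v : Fin 4 → ℂ) : M4 :=
  !![0, v 2 - I*v 3, v 0 - I*v 1, 0;
     v 2 + I*v 3, 0, 0, v 0 - I*v 1;
     v 0 + I*v 1, 0, 0, -v 2 + I*v 3;
     0, v 0 + I*v 1, -v 2 - I*v 3, 0]

noncomputable def Mlin : (Fin 4 → ℂ) →ₗ[ℂ] M4 where
  toFun := Mv
  map_add' u v := by
    ext i j
    fin_cases i <;> fin_cases j <;> simp [Mv] <;> ring
  map_smul' r v := by
    ext i j
    fin_cases i <;> fin_cases j <;> simp [Mv] <;> ring

lemma Mv_sq (v : Fin 4 → ℂ) : Mlin v * Mlin v = algebraMap ℂ M4 (Q4 v) := by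
  have hI : (I:ℂ) * I = -1 := Complex.I_mul_I
  ext i j
  fin_cases i <;> fin_cases j <;>
    simp [Mlin, Mv, Matrix.mul_apply, Fin.sum_univ_four, Q4_apply,
      Matrix.algebraMap_matrix_apply]
  all_goals ring_nf
  all_goals simp only [Complex.I_sq]
  all_goals ring

noncomputable def π4 : Cl →ₐ[ℂ] M4 :=
  CliffordAlgebra.lift Q4 ⟨Mlin, Mv_sq⟩

lemma π4_ι (v : Fin 4 → ℂ) : π4 (CliffordAlgebra.ι Q4 v) = Mv v :=
  CliffordAlgebra.lift_ι_apply Mlin Mv_sq v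


end MatrixSide


section MatrixValues
open Complex Matrix

noncomputable def Eθ (t : ℝ) : ℂ := Complex.exp (t * Complex.I)

lemma Eθ_eq (t : ℝ) : Eθ t = Complex.exp (t * Complex.I) := rfl

lemma Eθ_add (s t : ℝ) : Eθ s * Eθ t = Eθ (s + t) := by
  rw [Eθ, Eθ, Eθ, ← Complex.exp_add]
  congr 1
  push_cast
  ring

lemma Eθ_zero : Eθ 0 = 1 := by simp [Eθ]

lemma Eθ_cos_sin (t : ℝ) : Eθ t = (Real.cos t : ℂ) + (Real.sin t : ℂ) * Complex.I := by
  rw [Complex.ofReal_cos, Complex.ofReal_sin, Eθ, Complex.exp_mul_I]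

noncomputable def D1m (t : ℝ) : M4 := Matrix.diagonal ![Eθ t, Eθ t, Eθ (-t), Eθ (-t)]
noncomputable def D2m (t : ℝ) : M4 := Matrix.diagonal ![Eθ t, Eθ (-t), Eθ t, Eθ (-t)]

lemma D1m_mul (s t : ℝ) : D1m s * D1m t = D1m (s + t) := by
  rw [D1m, D1m, D1m, Matrix.diagonal_mul_diagonal]
  refine congrArg Matrix.diagonal ?_
  funext i
  fin_cases i <;> simp [neg_add, ← Eθ_add] <;> exact mul_comm _ _

lemma D2m_mul (s t : ℝ) : D2m s * D2m t = D2m (s + t) := by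
  rw [D2m, D2m, D2m, Matrix.diagonal_mul_diagonal]
  refine congrArg Matrix.diagonal ?_
  funext i
  fin_cases i <;> simp [neg_add, ← Eθ_add] <;> exact mul_comm _ _

lemma D1m_zero : D1m 0 = 1 := by
  have h : ![Eθ 0, Eθ 0, Eθ (-0), Eθ (-0)] = (fun _ => 1 : Fin 4 → ℂ) := by
    funext i
    fin_cases i <;> simp [Eθ_zero]
  rw [D1m, h]
  exact Matrix.diagonal_one

lemma D2m_zero : D2m 0 = 1 := by
  have h : ![Eθ 0, Eθ (-0), Eθ 0, Eθ (-0)] = (fun _ => 1 : Fin 4 → ℂ) := by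
    funext i
    fin_cases i <;> simp [Eθ_zero]
  rw [D2m, h]
  exact Matrix.diagonal_one

lemma K1_val : Mv (Pi.single 0 1) * Mv (Pi.single 1 1)
    = Matrix.diagonal ![I, I, -I, -I] := by
  ext i j
  fin_cases i <;> fin_cases j <;>
    simp [Mv, Matrix.mul_apply, Fin.sum_univ_four, Matrix.diagonal_apply, Pi.single_apply,
      Matrix.vecHead, Matrix.vecTail]

lemma K2_val : Mv (Pi.single 2 1) * Mv (Pi.single 3 1)
    = Matrix.diagonal ![I, -I, I, -I] := by
  ext i j
  fin_cases i <;> fin_cases j <;>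
    simp [Mv, Matrix.mul_apply, Fin.sum_univ_four, Matrix.diagonal_apply, Pi.single_apply,
      Matrix.vecHead, Matrix.vecTail]

lemma F1m_eq : Mv (Pi.single 1 1)
    = !![0,0,-I,0; 0,0,0,-I; I,0,0,0; 0,I,0,0] := by
  ext i j
  fin_cases i <;> fin_cases j <;> simp [Mv, Pi.single_apply]

lemma F2m_eq : Mv (Pi.single 3 1)
    = !![0,-I,0,0; I,0,0,0; 0,0,0,I; 0,0,-I,0] := by
  ext i j
  fin_cases i <;> fin_cases j <;> simp [Mv, Pi.single_apply]

lemma π4_Rot1 (t : ℝ) : π4 (Rot J1 t) = D1m t := by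
  rw [Rot, map_add, AlgHom.commutes, _root_.map_smul]
  have hJ : π4 J1 = Matrix.diagonal ![I, I, -I, -I] := by
    rw [J1, _root_.map_mul, eC, eC, π4_ι, π4_ι, K1_val]
  rw [hJ]
  ext i j
  fin_cases i <;> fin_cases j <;>
    simp [D1m, Matrix.diagonal, Matrix.algebraMap_matrix_apply, Eθ_cos_sin] <;> ring

lemma π4_Rot2 (t : ℝ) : π4 (Rot J2 t) = D2m t := by
  rw [Rot, map_add, AlgHom.commutes, _root_.map_smul]
  have hJ : π4 J2 = Matrix.diagonal ![I, -I, I, -I] := by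
    rw [J2, _root_.map_mul, eC, eC, π4_ι, π4_ι, K2_val]
  rw [hJ]
  ext i j
  fin_cases i <;> fin_cases j <;>
    simp [D2m, Matrix.diagonal, Matrix.algebraMap_matrix_apply, Eθ_cos_sin] <;> ring

lemma D1D2 (s t : ℝ) : D1m s * D2m t
    = Matrix.diagonal ![Eθ s * Eθ t, Eθ s * Eθ (-t), Eθ (-s) * Eθ t, Eθ (-s) * Eθ (-t)] := by
  rw [D1m, D2m, Matrix.diagonal_mul_diagonal]
  refine congrArg Matrix.diagonal ?_
  funext i
  fin_cases i <;> simp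

end MatrixValues


section CliffordExtra
open CliffordAlgebra
variable (m1 m2 : ℕ)

lemma βanticommα (q p : ℤ) :
    ι Q4 (β m2 q) * ι Q4 (α m1 p) = - (ι Q4 (α m1 p) * ι Q4 (β m2 q)) := by
  rw [anticomm m1 m2 p q, neg_neg]

lemma αpair_βsingle (p p' q : ℤ) :
    (ι Q4 (α m1 p) * ι Q4 (α m1 p')) * ι Q4 (β m2 q)
      = ι Q4 (β m2 q) * (ι Q4 (α m1 p) * ι Q4 (α m1 p')) := by
  calc (ι Q4 (α m1 p) * ι Q4 (α m1 p')) * ι Q4 (β m2 q)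
      = ι Q4 (α m1 p) * (ι Q4 (α m1 p') * ι Q4 (β m2 q)) := by rw [mul_assoc]
    _ = ι Q4 (α m1 p) * (-(ι Q4 (β m2 q) * ι Q4 (α m1 p'))) := by rw [anticomm]
    _ = -(ι Q4 (α m1 p) * ι Q4 (β m2 q)) * ι Q4 (α m1 p') := by
        rw [mul_neg, neg_mul, mul_assoc]
    _ = (ι Q4 (β m2 q) * ι Q4 (α m1 p)) * ι Q4 (α m1 p') := by rw [anticomm, neg_neg]
    _ = ι Q4 (β m2 q) * (ι Q4 (α m1 p) * ι Q4 (α m1 p')) := by rw [mul_assoc]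

lemma βpair_αsingle (q q' p : ℤ) :
    (ι Q4 (β m2 q) * ι Q4 (β m2 q')) * ι Q4 (α m1 p)
      = ι Q4 (α m1 p) * (ι Q4 (β m2 q) * ι Q4 (β m2 q')) := by
  calc (ι Q4 (β m2 q) * ι Q4 (β m2 q')) * ι Q4 (α m1 p)
      = ι Q4 (β m2 q) * (ι Q4 (β m2 q') * ι Q4 (α m1 p)) := by rw [mul_assoc]
    _ = ι Q4 (β m2 q) * (-(ι Q4 (α m1 p) * ι Q4 (β m2 q'))) := by rw [βanticommα]
    _ = -(ι Q4 (β m2 q) * ι Q4 (α m1 p)) * ι Q4 (β m2 q') := by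
        rw [mul_neg, neg_mul, mul_assoc]
    _ = (ι Q4 (α m1 p) * ι Q4 (β m2 q)) * ι Q4 (β m2 q') := by rw [βanticommα, neg_neg]
    _ = ι Q4 (α m1 p) * (ι Q4 (β m2 q) * ι Q4 (β m2 q')) := by rw [mul_assoc]

lemma αpair_βpair (p p' q q' : ℤ) :
    (ι Q4 (α m1 p) * ι Q4 (α m1 p')) * (ι Q4 (β m2 q) * ι Q4 (β m2 q'))
      = (ι Q4 (β m2 q) * ι Q4 (β m2 q')) * (ι Q4 (α m1 p) * ι Q4 (α m1 p')) := by
  calc (ι Q4 (α m1 p) * ι Q4 (α m1 p')) * (ι Q4 (β m2 q) * ι Q4 (β m2 q'))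
      = ((ι Q4 (α m1 p) * ι Q4 (α m1 p')) * ι Q4 (β m2 q)) * ι Q4 (β m2 q') := by
        rw [← mul_assoc]
    _ = (ι Q4 (β m2 q) * (ι Q4 (α m1 p) * ι Q4 (α m1 p'))) * ι Q4 (β m2 q') := by
        rw [αpair_βsingle]
    _ = ι Q4 (β m2 q) * ((ι Q4 (α m1 p) * ι Q4 (α m1 p')) * ι Q4 (β m2 q')) := by
        rw [mul_assoc]
    _ = ι Q4 (β m2 q) * (ι Q4 (β m2 q') * (ι Q4 (α m1 p) * ι Q4 (α m1 p'))) := by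
        rw [αpair_βsingle]
    _ = (ι Q4 (β m2 q) * ι Q4 (β m2 q')) * (ι Q4 (α m1 p) * ι Q4 (α m1 p')) := by
        rw [← mul_assoc]

lemma refl_sq_α (p p' : ℤ) :
    (-(ι Q4 (α m1 p) * ι Q4 (α m1 p')) * ι Q4 (α m1 p))
      * (-(ι Q4 (α m1 p) * ι Q4 (α m1 p')) * ι Q4 (α m1 p)) = 1 := by
  set A := ι Q4 (α m1 p)
  set B := ι Q4 (α m1 p')
  have hA : A * A = 1 := ια_sq m1 p
  have hB : B * B = 1 := ια_sq m1 p'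
  calc (-(A*B)*A) * (-(A*B)*A) = A*(B*((A*A)*(B*A))) := by noncomm_ring
    _ = A*(B*(B*A)) := by rw [hA, one_mul]
    _ = A*((B*B)*A) := by rw [← mul_assoc B B A]
    _ = A*A := by rw [hB, one_mul]
    _ = 1 := hA

lemma refl_sq_β (q q' : ℤ) :
    (-(ι Q4 (β m2 q) * ι Q4 (β m2 q')) * ι Q4 (β m2 q))
      * (-(ι Q4 (β m2 q) * ι Q4 (β m2 q')) * ι Q4 (β m2 q)) = 1 := by
  set A := ι Q4 (β m2 q)
  set B := ι Q4 (β m2 q')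
  have hA : A * A = 1 := ιβ_sq m2 q
  have hB : B * B = 1 := ιβ_sq m2 q'
  calc (-(A*B)*A) * (-(A*B)*A) = A*(B*((A*A)*(B*A))) := by noncomm_ring
    _ = A*(B*(B*A)) := by rw [hA, one_mul]
    _ = A*((B*B)*A) := by rw [← mul_assoc B B A]
    _ = A*A := by rw [hB, one_mul]
    _ = 1 := hA

end CliffordExtra

section Phi
open CliffordAlgebra
variable (m1 m2 : ℕ)

/-- the unit `ι(α_{m1})` -/
noncomputable def uf1 : Clˣ :=
  ⟨CliffordAlgebra.ι Q4 (α m1 m1), CliffordAlgebra.ι Q4 (α m1 m1), ια_sq m1 m1, ια_sq m1 m1⟩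

noncomputable def ux1 : Clˣ :=
  ⟨CliffordAlgebra.ι Q4 (α m1 1), CliffordAlgebra.ι Q4 (α m1 1), ια_sq m1 1, ια_sq m1 1⟩

noncomputable def uf2 : Clˣ :=
  ⟨CliffordAlgebra.ι Q4 (β m2 m2), CliffordAlgebra.ι Q4 (β m2 m2), ιβ_sq m2 m2, ιβ_sq m2 m2⟩

noncomputable def ux2 : Clˣ :=
  ⟨CliffordAlgebra.ι Q4 (β m2 1), CliffordAlgebra.ι Q4 (β m2 1), ιβ_sq m2 1, ιβ_sq m2 1⟩

noncomputable def ur1 : Clˣ := -(uf1 m1 * ux1 m1)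
noncomputable def ur2 : Clˣ := -(uf2 m2 * ux2 m2)

noncomputable def gmap : Gen → Clˣ
  | Gen.z => -1
  | Gen.r1 => ur1 m1
  | Gen.f1 => uf1 m1
  | Gen.r2 => ur2 m2
  | Gen.f2 => uf2 m2

lemma ur1_val : ((ur1 m1 : Clˣ) : Cl)
    = -(CliffordAlgebra.ι Q4 (α m1 m1) * CliffordAlgebra.ι Q4 (α m1 1)) := rfl

lemma ur2_val : ((ur2 m2 : Clˣ) : Cl)
    = -(CliffordAlgebra.ι Q4 (β m2 m2) * CliffordAlgebra.ι Q4 (β m2 1)) := rfl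

variable (h1 : 1 ≤ m1) (h2 : 1 ≤ m2)

include h1 h2 in
lemma hrels : ∀ r ∈ rels m1 m2, FreeGroup.lift (gmap m1 m2) r = 1 := by
  intro r hr
  simp only [rels, Set.mem_insert_iff, Set.mem_singleton_iff] at hr
  rcases hr with rfl|rfl|rfl|rfl|rfl|rfl|rfl|rfl|rfl|rfl|rfl <;>
    simp only [map_mul, map_pow, map_inv, FreeGroup.lift_apply_of, gmap]
  · -- r1^m1 = z
    have : (ur1 m1) ^ m1 = -1 := by
      ext
      rw [Units.val_pow_eq_pow_val, ur1_val, r1_pow_top h1]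
      rfl
    rw [this]
    simp
  · -- r2^m2 = z
    have : (ur2 m2) ^ m2 = -1 := by
      ext
      rw [Units.val_pow_eq_pow_val, ur2_val, r2_pow_top h2]
      rfl
    rw [this]
    simp
  · -- f1^2 = 1
    ext
    rw [Units.val_pow_eq_pow_val, pow_two, Units.val_one]
    exact ια_sq m1 m1
  · -- f2^2 = 1
    ext
    rw [Units.val_pow_eq_pow_val, pow_two, Units.val_one]
    exact ιβ_sq m2 m2
  · -- (r1 f1)^2 = 1
    ext
    rw [Units.val_pow_eq_pow_val, pow_two, Units.val_one, Units.val_mul, ur1_val]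
    exact refl_sq_α m1 m1 1
  · -- (r2 f2)^2 = 1
    ext
    rw [Units.val_pow_eq_pow_val, pow_two, Units.val_one, Units.val_mul, ur2_val]
    exact refl_sq_β m2 m2 1
  · -- r1 r2 = r2 r1
    have : ur1 m1 * ur2 m2 = ur2 m2 * ur1 m1 := by
      ext
      rw [Units.val_mul, Units.val_mul, ur1_val, ur2_val, neg_mul_neg, neg_mul_neg]
      exact αpair_βpair m1 m2 m1 1 m2 1
    rw [this]
    group
  · -- r1 f2 = f2 r1
    have : ur1 m1 * uf2 m2 = uf2 m2 * ur1 m1 := by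
      ext
      rw [Units.val_mul, Units.val_mul, ur1_val]
      show -(_ * _) * (CliffordAlgebra.ι Q4 (β m2 m2)) = (CliffordAlgebra.ι Q4 (β m2 m2)) * _
      rw [neg_mul, αpair_βsingle, mul_neg]
    rw [this]
    group
  · -- r2 f1 = f1 r2
    have : ur2 m2 * uf1 m1 = uf1 m1 * ur2 m2 := by
      ext
      rw [Units.val_mul, Units.val_mul, ur2_val]
      show -(_ * _) * (CliffordAlgebra.ι Q4 (α m1 m1)) = (CliffordAlgebra.ι Q4 (α m1 m1)) * _
      rw [neg_mul, βpair_αsingle, mul_neg]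
    rw [this]
    group
  · -- (f1 f2)^2 = z
    have : (uf1 m1 * uf2 m2) ^ 2 = -1 := by
      ext
      rw [Units.val_pow_eq_pow_val, pow_two, Units.val_mul]
      show (CliffordAlgebra.ι Q4 (α m1 m1) * CliffordAlgebra.ι Q4 (β m2 m2))
        * (CliffordAlgebra.ι Q4 (α m1 m1) * CliffordAlgebra.ι Q4 (β m2 m2)) = ((-1 : Clˣ) : Cl)
      rw [αβ_sq m1 m2 m1 m2]
      rfl
    rw [this]
    simp
  · -- z^2 = 1
    ext
    rw [Units.val_pow_eq_pow_val, pow_two]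
    show ((-1 : Clˣ) : Cl) * ((-1 : Clˣ) : Cl) = _
    simp

/-- The homomorphism `W̃ → 𝒞ˣ`. -/
noncomputable def φW : Wt m1 m2 →* Clˣ :=
  PresentedGroup.toGroup (hrels m1 m2 h1 h2)

lemma φW_z : φW m1 m2 h1 h2 (wz m1 m2) = -1 := PresentedGroup.toGroup.of _
lemma φW_r1 : φW m1 m2 h1 h2 (wr1 m1 m2) = ur1 m1 := PresentedGroup.toGroup.of _
lemma φW_f1 : φW m1 m2 h1 h2 (wf1 m1 m2) = uf1 m1 := PresentedGroup.toGroup.of _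
lemma φW_r2 : φW m1 m2 h1 h2 (wr2 m1 m2) = ur2 m2 := PresentedGroup.toGroup.of _
lemma φW_f2 : φW m1 m2 h1 h2 (wf2 m1 m2) = uf2 m2 := PresentedGroup.toGroup.of _

end Phi


section Final
open Complex Matrix
variable (m1 m2 : ℕ) (h1 : 1 ≤ m1) (h2 : 1 ≤ m2)

/-- The composite `W̃ → 𝒞ˣ → M4ˣ`. -/
noncomputable def ΨW : Wt m1 m2 →* (M4)ˣ :=
  (Units.map π4.toMonoidHom).comp (φW m1 m2 h1 h2)

lemma ΨW_apply (w : Wt m1 m2) :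
    ((ΨW m1 m2 h1 h2 w : (M4)ˣ) : M4) = π4 ((φW m1 m2 h1 h2 w : Clˣ) : Cl) := rfl

lemma ΨW_r1_val : ((ΨW m1 m2 h1 h2 (wr1 m1 m2) : (M4)ˣ) : M4) = D1m (Real.pi / m1) := by
  rw [ΨW_apply, φW_r1, ur1_val, r1_val h1, π4_Rot1]
  norm_num

lemma ΨW_r2_val : ((ΨW m1 m2 h1 h2 (wr2 m1 m2) : (M4)ˣ) : M4) = D2m (Real.pi / m2) := by
  rw [ΨW_apply, φW_r2, ur2_val, r2_val h2, π4_Rot2]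
  norm_num

lemma ΨW_f1_val : ((ΨW m1 m2 h1 h2 (wf1 m1 m2) : (M4)ˣ) : M4) = Mv (Pi.single 1 1) := by
  rw [ΨW_apply, φW_f1]
  show π4 (CliffordAlgebra.ι Q4 (α m1 m1)) = _
  rw [α_top h1, π4_ι]

lemma ΨW_f2_val : ((ΨW m1 m2 h1 h2 (wf2 m1 m2) : (M4)ˣ) : M4) = Mv (Pi.single 3 1) := by
  rw [ΨW_apply, φW_f2]
  show π4 (CliffordAlgebra.ι Q4 (β m2 m2)) = _
  rw [β_top h2, π4_ι]

lemma ΨW_r1_inv_val :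
    ((ΨW m1 m2 h1 h2 ((wr1 m1 m2)⁻¹) : (M4)ˣ) : M4) = D1m (-(Real.pi / m1)) := by
  rw [_root_.map_inv]
  set u := ΨW m1 m2 h1 h2 (wr1 m1 m2) with hu
  have hval : (u : M4) = D1m (Real.pi / m1) := ΨW_r1_val m1 m2 h1 h2
  have hmul : D1m (Real.pi / m1) * D1m (-(Real.pi / m1)) = 1 := by
    rw [D1m_mul, add_neg_cancel, D1m_zero]
  calc ((u⁻¹ : (M4)ˣ) : M4) = (u⁻¹ : (M4)ˣ) * ((u : M4) * D1m (-(Real.pi / m1))) := by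
        rw [hval, hmul, mul_one]
    _ = ((u⁻¹ * u : (M4)ˣ) : M4) * D1m (-(Real.pi / m1)) := by
        rw [Units.val_mul, mul_assoc]
    _ = D1m (-(Real.pi / m1)) := by rw [inv_mul_cancel u, Units.val_one, one_mul]

lemma ΨW_r2_inv_val :
    ((ΨW m1 m2 h1 h2 ((wr2 m1 m2)⁻¹) : (M4)ˣ) : M4) = D2m (-(Real.pi / m2)) := by
  rw [_root_.map_inv]
  set u := ΨW m1 m2 h1 h2 (wr2 m1 m2) with hu
  have hval : (u : M4) = D2m (Real.pi / m2) := ΨW_r2_val m1 m2 h1 h2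
  have hmul : D2m (Real.pi / m2) * D2m (-(Real.pi / m2)) = 1 := by
    rw [D2m_mul, add_neg_cancel, D2m_zero]
  calc ((u⁻¹ : (M4)ˣ) : M4) = (u⁻¹ : (M4)ˣ) * ((u : M4) * D2m (-(Real.pi / m2))) := by
        rw [hval, hmul, mul_one]
    _ = ((u⁻¹ * u : (M4)ˣ) : M4) * D2m (-(Real.pi / m2)) := by
        rw [Units.val_mul, mul_assoc]
    _ = D2m (-(Real.pi / m2)) := by rw [inv_mul_cancel u, Units.val_one, one_mul]

lemma ΨW_r1_zpow (k : ℤ) :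
    ((ΨW m1 m2 h1 h2 (wr1 m1 m2 ^ k) : (M4)ˣ) : M4) = D1m (k * (Real.pi / m1)) := by
  induction k using Int.induction_on with
  | zero =>
      rw [zpow_zero, _root_.map_one, Units.val_one]
      rw [show ((0:ℤ):ℝ) * (Real.pi / m1) = 0 by norm_num, D1m_zero]
  | succ n ih =>
      rw [_root_.zpow_add_one, _root_.map_mul, Units.val_mul, ih, ΨW_r1_val, D1m_mul]
      congr 1
      push_cast
      ring
  | pred n ih =>
      rw [_root_.zpow_sub_one, _root_.map_mul, Units.val_mul, ih, ΨW_r1_inv_val, D1m_mul]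
      congr 1
      push_cast
      ring

lemma ΨW_r2_zpow (k : ℤ) :
    ((ΨW m1 m2 h1 h2 (wr2 m1 m2 ^ k) : (M4)ˣ) : M4) = D2m (k * (Real.pi / m2)) := by
  induction k using Int.induction_on with
  | zero =>
      rw [zpow_zero, _root_.map_one, Units.val_one]
      rw [show ((0:ℤ):ℝ) * (Real.pi / m2) = 0 by norm_num, D2m_zero]
  | succ n ih =>
      rw [_root_.zpow_add_one, _root_.map_mul, Units.val_mul, ih, ΨW_r2_val, D2m_mul]
      congr 1
      push_cast
      ring
  | pred n ih =>
      rw [_root_.zpow_sub_one, _root_.map_mul, Units.val_mul, ih, ΨW_r2_inv_val, D2m_mul]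
      congr 1
      push_cast
      ring

/-- helper to extract an integer from `Eθ x = 1`. -/
lemma Eθ_eq_one (x : ℝ) (hx : Eθ x = 1) : ∃ n : ℤ, x = n * (2 * Real.pi) := by
  rw [Eθ_eq] at hx
  obtain ⟨n, hn⟩ := Complex.exp_eq_one_iff.mp hx
  refine ⟨n, ?_⟩
  have h' : ((x : ℂ)) * I = (((n * (2 * Real.pi) : ℝ) : ℂ)) * I := by
    push_cast
    push_cast at hn
    linear_combination hn
  have := mul_right_cancel₀ Complex.I_ne_zero h'
  exact_mod_cast this

end Final

/-- The assignments `z ↦ −1`, `f1 ↦ ι(α_{m1})`, `f2 ↦ ι(β_{m2})`,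
`r1 ↦ −ι(α_{m1})ι(α_1)`, `r2 ↦ −ι(β_{m2})ι(β_1)` respect the defining relations of
`W̃(m1,m2)` (in particular `ι(α_p)² = 1`, `ι(β_q)² = 1`, `(ι(α_p)ι(β_q))² = −1`) and
define an injective group homomorphism from `W̃(m1,m2)` to the units of `𝒞`. -/
theorem embedding_into_clifford_units (m1 m2 : ℕ) (h1 : 1 ≤ m1) (h2 : 1 ≤ m2) :
    (∀ p q : ℤ,
      CliffordAlgebra.ι Q4 (α m1 p) * CliffordAlgebra.ι Q4 (α m1 p) = 1 ∧
      CliffordAlgebra.ι Q4 (β m2 q) * CliffordAlgebra.ι Q4 (β m2 q) = 1 ∧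
      (CliffordAlgebra.ι Q4 (α m1 p) * CliffordAlgebra.ι Q4 (β m2 q))
        * (CliffordAlgebra.ι Q4 (α m1 p) * CliffordAlgebra.ι Q4 (β m2 q)) = -1) ∧
    (∃ φ : Wt m1 m2 →* Clˣ,
      Function.Injective φ ∧
      ((φ (wz m1 m2) : Cl) = -1) ∧
      ((φ (wf1 m1 m2) : Cl) = CliffordAlgebra.ι Q4 (α m1 m1)) ∧
      ((φ (wf2 m1 m2) : Cl) = CliffordAlgebra.ι Q4 (β m2 m2)) ∧
      ((φ (wr1 m1 m2) : Cl)
        = -(CliffordAlgebra.ι Q4 (α m1 m1) * CliffordAlgebra.ι Q4 (α m1 1))) ∧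
      ((φ (wr2 m1 m2) : Cl)
        = -(CliffordAlgebra.ι Q4 (β m2 m2) * CliffordAlgebra.ι Q4 (β m2 1)))) := by
  have hπ : Real.pi ≠ 0 := Real.pi_ne_zero
  have h2π : (2 * Real.pi) ≠ 0 := by positivity
  have hm1 : (m1:ℝ) ≠ 0 := Nat.cast_ne_zero.mpr (by omega)
  have hm2 : (m2:ℝ) ≠ 0 := Nat.cast_ne_zero.mpr (by omega)
  refine ⟨fun p q => ⟨ια_sq m1 p, ιβ_sq m2 q, αβ_sq m1 m2 p q⟩,
    φW m1 m2 h1 h2, ?_, ?_, ?_, ?_, ?_, ?_⟩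
  · -- injectivity
    rw [injective_iff_map_eq_one]
    intro w hw
    obtain ⟨a, b, c, d, rfl⟩ := exists_nf m1 m2 w
    have hψ : ((ΨW m1 m2 h1 h2 (nf m1 m2 a b c d) : (M4)ˣ) : M4) = 1 := by
      have h' : ΨW m1 m2 h1 h2 (nf m1 m2 a b c d) = 1 := by
        rw [ΨW, MonoidHom.comp_apply, hw, _root_.map_one]
      rw [h', Units.val_one]
    have hC : ((ΨW m1 m2 h1 h2 (cond c (wf1 m1 m2) 1) : (M4)ˣ) : M4)
        = cond c (Mv (Pi.single 1 1)) 1 := by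
      cases c
      · rw [cond_false, cond_false, _root_.map_one, Units.val_one]
      · rw [cond_true, cond_true]; exact ΨW_f1_val m1 m2 h1 h2
    have hD : ((ΨW m1 m2 h1 h2 (cond d (wf2 m1 m2) 1) : (M4)ˣ) : M4)
        = cond d (Mv (Pi.single 3 1)) 1 := by
      cases d
      · rw [cond_false, cond_false, _root_.map_one, Units.val_one]
      · rw [cond_true, cond_true]; exact ΨW_f2_val m1 m2 h1 h2
    rw [show nf m1 m2 a b c d = wr1 m1 m2 ^ a * wr2 m1 m2 ^ b
          * (cond c (wf1 m1 m2) 1) * (cond d (wf2 m1 m2) 1) from rfl,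
      _root_.map_mul, _root_.map_mul, _root_.map_mul, Units.val_mul, Units.val_mul,
      Units.val_mul, ΨW_r1_zpow, ΨW_r2_zpow, hC, hD, D1D2] at hψ
    -- rule out the reflection parts via the (0,0) entry
    cases c with
    | true =>
      exfalso
      cases d <;>
        · have h00 := congrArg (fun M : M4 => M 0 0) hψ
          simp [F1m_eq, F2m_eq, Matrix.mul_apply, Matrix.diagonal_apply,
            Fin.sum_univ_four, Matrix.one_apply] at h00
    | false =>
    cases d with
    | true =>
      exfalso
      have h00 := congrArg (fun M : M4 => M 0 0) hψ
      simp [F1m_eq, F2m_eq, Matrix.mul_apply, Matrix.diagonal_apply,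
        Fin.sum_univ_four, Matrix.one_apply] at h00
    | false =>
      simp only [cond_false, mul_one] at hψ
      have h00 := congrArg (fun M : M4 => M 0 0) hψ
      have h11 := congrArg (fun M : M4 => M 1 1) hψ
      have h22 := congrArg (fun M : M4 => M 2 2) hψ
      simp at h00 h11 h22
      rw [Eθ_add] at h00 h11 h22
      have hA : Eθ (2*((a:ℝ)*(Real.pi/m1))) = 1 := by
        rw [show 2*((a:ℝ)*(Real.pi/m1)) = ((a:ℝ)*(Real.pi/m1) + (b:ℝ)*(Real.pi/m2))
            + ((a:ℝ)*(Real.pi/m1) + -((b:ℝ)*(Real.pi/m2))) by ring, ← Eθ_add, h00, h11, one_mul]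
      have hB : Eθ (2*((b:ℝ)*(Real.pi/m2))) = 1 := by
        rw [show 2*((b:ℝ)*(Real.pi/m2)) = ((a:ℝ)*(Real.pi/m1) + (b:ℝ)*(Real.pi/m2))
            + (-((a:ℝ)*(Real.pi/m1)) + (b:ℝ)*(Real.pi/m2)) by ring, ← Eθ_add, h00, h22, one_mul]
      obtain ⟨n, hn⟩ := Eθ_eq_one _ hA
      obtain ⟨n', hn'⟩ := Eθ_eq_one _ hB
      have ha : (a:ℝ) = n * m1 := by
        have hq : (2*Real.pi) * ((a:ℝ)/m1) = (2*Real.pi) * n := by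
          rw [show (2*Real.pi) * ((a:ℝ)/m1) = 2*((a:ℝ)*(Real.pi/m1)) by ring, hn]; ring
        have h' := mul_left_cancel₀ h2π hq
        rw [div_eq_iff hm1] at h'
        exact h' 
      have hb : (b:ℝ) = n' * m2 := by
        have hq : (2*Real.pi) * ((b:ℝ)/m2) = (2*Real.pi) * n' := by
          rw [show (2*Real.pi) * ((b:ℝ)/m2) = 2*((b:ℝ)*(Real.pi/m2)) by ring, hn']; ring
        have h' := mul_left_cancel₀ h2π hq
        rw [div_eq_iff hm2] at h'
        exact h' 
      have haZ : a = n * m1 := by exact_mod_cast ha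
      have hbZ : b = n' * m2 := by exact_mod_cast hb
      have harg : (a:ℝ)*(Real.pi/m1) + (b:ℝ)*(Real.pi/m2) = ((n + n' : ℤ):ℝ) * Real.pi := by
        rw [ha, hb]
        push_cast
        field_simp
      rw [harg] at h00
      obtain ⟨k, hk⟩ := Eθ_eq_one _ h00
      have hknn : (n + n' : ℤ) = 2*k := by
        have h' := mul_right_cancel₀ hπ (hk.trans (by push_cast; ring : (k:ℝ) * (2*Real.pi) = ((2*k : ℤ):ℝ) * Real.pi))
        exact_mod_cast h'
      show nf m1 m2 a b false false = 1
      have hnf : nf m1 m2 a b false false = wr1 m1 m2 ^ a * wr2 m1 m2 ^ b := by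
        simp [nf]
      rw [hnf, haZ, hbZ,
        show (n*(m1:ℤ) : ℤ) = (m1:ℤ)*n by ring, show (n'*(m2:ℤ) : ℤ) = (m2:ℤ)*n' by ring,
        zpow_mul, zpow_mul, zpow_natCast, zpow_natCast, wrel_r1, wrel_r2, ← zpow_add, hknn,
        zpow_mul]
      have hz2 : (wz m1 m2) ^ (2:ℤ) = 1 := by
        rw [show (2:ℤ) = ((2:ℕ):ℤ) from rfl, zpow_natCast, pow_two, wrel_z2]
      rw [hz2, one_zpow]
  · rw [φW_z]; simp
  · rw [φW_f1]; rfl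
  · rw [φW_f2]; rfl
  · rw [φW_r1]; exact ur1_val m1
  · rw [φW_r2]; exact ur2_val m2

end Stmt13
end
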